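/- arXiv:math/0602005 — 5 statements merged into one kernel-verified Lean document; each statement's English description precedes it below -/
import Mathlib

section
/- Let the strongly monotone, forward complete system ẋ = f(x) on X be translation invariant along the unit vector v ∈ interior(K), with X closed and invariant under translations by v. Then every solution φ_t(ξ) that is bounded modulo v is such that π_v(φ_t(ξ)) converges as t → ∞ to a point p ∈ X ∩ v^⊥ with f(p) ∈ span{v} (an equilibrium of the projected system ẋ̃ = (I − vvᵀ)f(x̃)); moreover this equilibrium p is unique. -/
open Filter Topology Set

/-- The orthogonal projection `π_v(x) = x - (vᵀx) v` onto `v^⊥`. -/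
noncomputable def piProj {n : ℕ} (v x : EuclideanSpace ℝ (Fin n)) :
    EuclideanSpace ℝ (Fin n) :=
  x - (inner ℝ v x : ℝ) • v

section ConeAux

variable {n : ℕ}

/-- Hypothesis bundle: `K` is a closed pointed convex cone and `v` a unit interior vector. -/
structure GoodCone (K : Set (EuclideanSpace ℝ (Fin n))) (v : EuclideanSpace ℝ (Fin n)) : Prop where
  closed : IsClosed K
  conv : Convex ℝ K
  cone : ∀ c : ℝ, 0 ≤ c → ∀ x ∈ K, c • x ∈ K
  pointed : ∀ x ∈ K, -x ∈ K → x = 0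
  vint : v ∈ interior K
  vnorm : ‖v‖ = 1

/-- `lmin K v w` is the least `l` such that `w ⪯ l • v`. -/
noncomputable def lmin (K : Set (EuclideanSpace ℝ (Fin n))) (v w : EuclideanSpace ℝ (Fin n)) : ℝ :=
  sInf {l : ℝ | l • v - w ∈ K}

variable {K : Set (EuclideanSpace ℝ (Fin n))} {v : EuclideanSpace ℝ (Fin n)}

namespace GoodCone

theorem add_mem (h : GoodCone K v) {x y : EuclideanSpace ℝ (Fin n)}
    (hx : x ∈ K) (hy : y ∈ K) : x + y ∈ K := by
  have hc := h.conv hx hy (by norm_num : (0:ℝ) ≤ 1/2) (by norm_num : (0:ℝ) ≤ 1/2) (by norm_num)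
  have h2 := h.cone 2 (by norm_num) _ hc
  have he : (2:ℝ) • ((1/2 : ℝ) • x + (1/2 : ℝ) • y) = x + y := by
    rw [smul_add, smul_smul, smul_smul]; norm_num
  rwa [he] at h2

theorem zero_mem (h : GoodCone K v) : (0 : EuclideanSpace ℝ (Fin n)) ∈ K := by
  have := h.cone 0 le_rfl v (interior_subset h.vint)
  rwa [zero_smul] at this

theorem neg_v_not_mem (h : GoodCone K v) : -v ∉ K := by
  intro hm
  have h0 := h.pointed v (interior_subset h.vint) hm
  have := h.vnorm
  rw [h0, norm_zero] at this; norm_num at this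

/-- if `c • v ∈ K` then `0 ≤ c`. -/
theorem nonneg_of_smul_mem (h : GoodCone K v) {c : ℝ} (hc : c • v ∈ K) : 0 ≤ c := by
  by_contra hneg
  push_neg at hneg
  have hpos : (0:ℝ) < -c := by linarith
  have hmem := h.cone (-c)⁻¹ (le_of_lt (inv_pos.2 hpos)) _ hc
  rw [smul_smul] at hmem
  have he : (-c)⁻¹ * c = -1 := by rw [inv_neg, neg_mul, inv_mul_cancel₀ hneg.ne]
  rw [he, neg_one_smul] at hmem
  exact h.neg_v_not_mem hmem

/-- positive multiples of `v` minus relatively small vectors are in `K`. -/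
theorem scale_mem (h : GoodCone K v) :
    ∃ ε > 0, ∀ (w : EuclideanSpace ℝ (Fin n)) (l : ℝ), 0 < l → ‖w‖ < l * ε → l • v - w ∈ K := by
  obtain ⟨ε, hε, hball⟩ := Metric.isOpen_iff.1 isOpen_interior v h.vint
  refine ⟨ε, hε, fun w l hl hw => ?_⟩
  have hmem : v - l⁻¹ • w ∈ K := by
    apply interior_subset; apply hball
    rw [Metric.mem_ball, dist_eq_norm]
    have he : v - l⁻¹ • w - v = -(l⁻¹ • w) := by abel
    rw [he, norm_neg, norm_smul, norm_inv, Real.norm_eq_abs, abs_of_pos hl,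
      inv_mul_lt_iff₀ hl]
    linarith [hw]
  have := h.cone l hl.le _ hmem
  rwa [smul_sub, smul_smul, mul_inv_cancel₀ hl.ne', one_smul] at this


theorem lminS_nonempty (h : GoodCone K v) (w : EuclideanSpace ℝ (Fin n)) :
    ∃ l : ℝ, l • v - w ∈ K := by
  obtain ⟨ε, hε, hsc⟩ := h.scale_mem
  refine ⟨(‖w‖ + 1) / ε, hsc w _ (by positivity) ?_⟩
  rw [div_mul_cancel₀ _ hε.ne']
  linarith

theorem lminS_bddBelow (h : GoodCone K v) (w : EuclideanSpace ℝ (Fin n)) :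
    BddBelow {l : ℝ | l • v - w ∈ K} := by
  obtain ⟨m, hm⟩ := h.lminS_nonempty (-w)
  refine ⟨-m, fun l hl => ?_⟩
  have hsum := h.add_mem hl hm
  have he : l • v - w + (m • v - -w) = (l + m) • v := by
    rw [add_smul]; abel
  rw [he] at hsum
  have := h.nonneg_of_smul_mem hsum
  linarith

theorem lmin_mem (h : GoodCone K v) (w : EuclideanSpace ℝ (Fin n)) :
    lmin K v w • v - w ∈ K := by
  have hcl : IsClosed {l : ℝ | l • v - w ∈ K} := by
    have : {l : ℝ | l • v - w ∈ K} = (fun l : ℝ => l • v - w) ⁻¹' K := rfl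
    rw [this]
    exact IsClosed.preimage ((continuous_id.smul continuous_const).sub continuous_const) h.closed
  obtain ⟨l, hl⟩ := h.lminS_nonempty w
  exact hcl.csInf_mem ⟨l, hl⟩ (h.lminS_bddBelow w)

theorem lmin_le (h : GoodCone K v) {w : EuclideanSpace ℝ (Fin n)} {l : ℝ}
    (hl : l • v - w ∈ K) : lmin K v w ≤ l :=
  csInf_le (h.lminS_bddBelow w) hl

theorem lmin_zero (h : GoodCone K v) : lmin K v (0 : EuclideanSpace ℝ (Fin n)) = 0 := by
  refine le_antisymm (h.lmin_le ?_) ?_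
  · rw [zero_smul, sub_zero]; exact h.zero_mem
  · have := h.lmin_mem (0 : EuclideanSpace ℝ (Fin n))
    rw [sub_zero] at this
    exact h.nonneg_of_smul_mem this

theorem lmin_add_le (h : GoodCone K v) (w₁ w₂ : EuclideanSpace ℝ (Fin n)) :
    lmin K v (w₁ + w₂) ≤ lmin K v w₁ + lmin K v w₂ := by
  apply h.lmin_le
  have := h.add_mem (h.lmin_mem w₁) (h.lmin_mem w₂)
  have he : lmin K v w₁ • v - w₁ + (lmin K v w₂ • v - w₂)
      = (lmin K v w₁ + lmin K v w₂) • v - (w₁ + w₂) := by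
    rw [add_smul]; abel
  rwa [he] at this

theorem lmin_add_smul_le (h : GoodCone K v) (w : EuclideanSpace ℝ (Fin n)) (c : ℝ) :
    lmin K v (w + c • v) ≤ lmin K v w + c := by
  apply h.lmin_le
  have he : (lmin K v w + c) • v - (w + c • v) = lmin K v w • v - w := by
    rw [add_smul]; abel
  rw [he]; exact h.lmin_mem w

theorem lmin_add_smul (h : GoodCone K v) (w : EuclideanSpace ℝ (Fin n)) (c : ℝ) :
    lmin K v (w + c • v) = lmin K v w + c := by
  refine le_antisymm (h.lmin_add_smul_le w c) ?_
  have := h.lmin_add_smul_le (w + c • v) (-c)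
  have he : w + c • v + (-c) • v = w := by rw [neg_smul]; abel
  rw [he] at this
  linarith

theorem lmin_lt_of_interior (h : GoodCone K v) {w : EuclideanSpace ℝ (Fin n)} {l : ℝ}
    (hl : l • v - w ∈ interior K) : lmin K v w < l := by
  obtain ⟨ε, hε, hball⟩ := Metric.isOpen_iff.1 isOpen_interior _ hl
  have hmem : (l - ε / 2) • v - w ∈ K := by
    apply interior_subset; apply hball
    rw [Metric.mem_ball, dist_eq_norm]
    have he : (l - ε / 2) • v - w - (l • v - w) = -((ε / 2) • v) := by
      rw [sub_smul]; abel
    rw [he, norm_neg, norm_smul, h.vnorm, Real.norm_eq_abs, abs_of_pos (by linarith), mul_one]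
    linarith
  have := h.lmin_le hmem
  linarith

theorem lmin_le_norm (h : GoodCone K v) :
    ∃ C > 0, ∀ w : EuclideanSpace ℝ (Fin n), lmin K v w ≤ C * ‖w‖ := by
  obtain ⟨ε, hε, hsc⟩ := h.scale_mem
  refine ⟨2 / ε, by positivity, fun w => ?_⟩
  rcases eq_or_ne w 0 with rfl | hw
  · rw [h.lmin_zero, norm_zero, mul_zero]
  · have hnw : (0:ℝ) < ‖w‖ := norm_pos_iff.2 hw
    have hmem := hsc w (2 * ‖w‖ / ε) (by positivity) (by
      rw [div_mul_cancel₀ _ hε.ne']; linarith)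
    have := h.lmin_le hmem
    calc lmin K v w ≤ 2 * ‖w‖ / ε := this
      _ = 2 / ε * ‖w‖ := by ring

theorem lmin_continuous (h : GoodCone K v) : Continuous (lmin K v) := by
  obtain ⟨C, hC, hb⟩ := h.lmin_le_norm
  have hlip : ∀ w w' : EuclideanSpace ℝ (Fin n), lmin K v w - lmin K v w' ≤ C * ‖w - w'‖ := by
    intro w w'
    have h1 : lmin K v w ≤ lmin K v w' + lmin K v (w - w') := by
      have := h.lmin_add_le w' (w - w')
      rwa [add_sub_cancel] at this
    have h2 := hb (w - w')
    linarith
  refine (LipschitzWith.of_dist_le_mul (K := Real.toNNReal C) (f := lmin K v) ?_).continuous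
  intro w w'
  rw [Real.dist_eq, dist_eq_norm, Real.coe_toNNReal C hC.le, abs_sub_le_iff]
  constructor
  · exact hlip w w'
  · have := hlip w' w
    rwa [norm_sub_rev] at this

theorem dd_nonneg (h : GoodCone K v) (x y : EuclideanSpace ℝ (Fin n)) :
    0 ≤ lmin K v (y - x) + lmin K v (x - y) := by
  have h0 := h.lmin_add_le (y - x) (x - y)
  have he : y - x + (x - y) = 0 := by abel
  rw [he, h.lmin_zero] at h0
  linarith

theorem eq_smul_of_dd_zero (h : GoodCone K v) {x y : EuclideanSpace ℝ (Fin n)}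
    (hdd : lmin K v (y - x) + lmin K v (x - y) = 0) :
    y - x = lmin K v (y - x) • v := by
  have ha := h.lmin_mem (y - x)
  have hb := h.lmin_mem (x - y)
  have hsum : lmin K v (y - x) • v - (y - x) + (lmin K v (x - y) • v - (x - y)) = 0 := by
    have : lmin K v (y - x) • v - (y - x) + (lmin K v (x - y) • v - (x - y))
        = (lmin K v (y - x) + lmin K v (x - y)) • v := by rw [add_smul]; abel
    rw [this, hdd, zero_smul]
  have hneg : -(lmin K v (y - x) • v - (y - x)) ∈ K := by
    have he : -(lmin K v (y - x) • v - (y - x)) = lmin K v (x - y) • v - (x - y) := by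
      have := hsum
      apply neg_eq_of_add_eq_zero_right this
    rw [he]; exact hb
  have h0 := h.pointed _ ha hneg
  have := sub_eq_zero.1 h0
  exact this.symm

end GoodCone

end ConeAux


section ODEAux

variable {n : ℕ}

theorem lipschitzOnWith_weaken {α β : Type*} [PseudoEMetricSpace α] [PseudoEMetricSpace β]
    {K K' : NNReal} {f : α → β} {s : Set α} (h : LipschitzOnWith K f s) (hK : K ≤ K') :
    LipschitzOnWith K' f s := fun _ hx _ hy =>
  le_trans (h hx hy) (mul_le_mul_left (ENNReal.coe_le_coe.2 hK) _)

theorem master {X : Set (EuclideanSpace ℝ (Fin n))}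
    {f : EuclideanSpace ℝ (Fin n) → EuclideanSpace ℝ (Fin n)}
    (hf : ∀ x ∈ X, ∃ L : NNReal, ∃ U ∈ nhdsWithin x X, LipschitzOnWith L f U)
    {T : ℝ} (hT : 0 ≤ T) {g : ℝ → EuclideanSpace ℝ (Fin n)}
    (hgc : ContinuousOn g (Icc 0 T)) (hgX : ∀ t ∈ Icc 0 T, g t ∈ X)
    (hgd : ∀ t ∈ Ico 0 T, HasDerivWithinAt g (f (g t)) (Ici t) t) :
    ∃ κ > 0, ∃ C > 0, ∀ h : ℝ → EuclideanSpace ℝ (Fin n), ContinuousOn h (Icc 0 T) →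
      (∀ t ∈ Icc 0 T, h t ∈ X) →
      (∀ t ∈ Ico 0 T, HasDerivWithinAt h (f (h t)) (Ici t) t) → dist (g 0) (h 0) ≤ κ →
      ∀ t ∈ Icc 0 T, dist (g t) (h t) ≤ C * dist (g 0) (h 0) := by
  classical
  set Cs := g '' Icc 0 T with hCs_def
  have hCs : IsCompact Cs := (isCompact_Icc).image_of_continuousOn hgc
  have key : ∀ x ∈ Cs, ∃ (L : NNReal) (W : Set (EuclideanSpace ℝ (Fin n))),
      IsOpen W ∧ x ∈ W ∧ LipschitzOnWith L f (W ∩ X) := by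
    intro x hx
    obtain ⟨t, ht, rfl⟩ := hx
    obtain ⟨L, U, hU, hlip⟩ := hf _ (hgX t ht)
    obtain ⟨W, hWo, hWx, hWU⟩ := mem_nhdsWithin.1 hU
    exact ⟨L, W, hWo, hWx, hlip.mono hWU⟩
  choose! L W hWo hWx hWl using key
  have hcov : Cs ⊆ ⋃ x ∈ Cs, W x := fun y hy => mem_biUnion hy (hWx y hy)
  obtain ⟨b, hbsub, hbfin, hbcov⟩ :=
    hCs.elim_finite_subcover_image (fun x hx => hWo x hx) hcov
  set L0 : NNReal := hbfin.toFinset.sup L with hL0_def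
  have hL0 : ∀ x ∈ b, L x ≤ L0 := fun x hx => Finset.le_sup (hbfin.mem_toFinset.2 hx)
  have hcov' : Cs ⊆ ⋃ i : b, W i := by
    intro y hy
    obtain ⟨x, hx, hyW⟩ := mem_iUnion₂.1 (hbcov hy)
    exact mem_iUnion.2 ⟨⟨x, hx⟩, hyW⟩
  obtain ⟨ε, hε, hleb⟩ := lebesgue_number_lemma_of_metric hCs (fun i : b => hWo i (hbsub i.2))
    hcov'
  set s : ℝ → Set (EuclideanSpace ℝ (Fin n)) :=
    fun t => if t ∈ Icc 0 T then Metric.ball (g t) ε ∩ X else ∅ with hs_def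
  have hlip : ∀ t, LipschitzOnWith L0 f (s t) := by
    intro t
    by_cases ht : t ∈ Icc 0 T
    · obtain ⟨i, hi⟩ := hleb (g t) (mem_image_of_mem g ht)
      have hsub : s t ⊆ W i ∩ X := by
        rw [hs_def]; simp only [ht, if_true]
        exact inter_subset_inter_left X hi
      exact lipschitzOnWith_weaken ((hWl i (hbsub i.2)).mono hsub) (hL0 i i.2)
    · rw [hs_def]; simp only [ht, if_false]
      exact fun x hx => absurd hx (notMem_empty x)
  set C1 : ℝ := Real.exp (L0 * T) with hC1_def
  have hC1 : 1 ≤ C1 := Real.one_le_exp (by positivity)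
  have hC1pos : 0 < C1 := lt_of_lt_of_le one_pos hC1
  refine ⟨ε / 4 / C1, by positivity, C1, hC1pos, ?_⟩
  intro h hhc hhX hhd hd0
  set δ := dist (g 0) (h 0) with hδ_def
  -- first, the solutions stay ε/2-close
  have main : ∀ τ ∈ Icc 0 T, (∀ t ∈ Ico 0 τ, dist (g t) (h t) ≤ ε / 2) →
      ∀ t ∈ Icc 0 τ, dist (g t) (h t) ≤ δ * Real.exp (L0 * t) := by
    intro τ hτ hclose
    have := dist_le_of_trajectories_ODE_of_mem (v := fun _ x => f x) (s := s) (K := L0)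
      (a := 0) (b := τ) (fun t _ => hlip t)
      (hgc.mono (Icc_subset_Icc_right hτ.2))
      (fun t ht => hgd t ⟨ht.1, lt_of_lt_of_le ht.2 hτ.2⟩)
      (fun t ht => by
        have htI : t ∈ Icc 0 T := ⟨ht.1, le_trans (le_of_lt ht.2) hτ.2⟩
        rw [hs_def]; simp only [htI, if_true]
        exact ⟨Metric.mem_ball_self hε, hgX t htI⟩)
      (hhc.mono (Icc_subset_Icc_right hτ.2))
      (fun t ht => hhd t ⟨ht.1, lt_of_lt_of_le ht.2 hτ.2⟩)
      (fun t ht => by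
        have htI : t ∈ Icc 0 T := ⟨ht.1, le_trans (le_of_lt ht.2) hτ.2⟩
        rw [hs_def]; simp only [htI, if_true]
        refine ⟨?_, hhX t htI⟩
        rw [Metric.mem_ball, dist_comm]
        exact lt_of_le_of_lt (hclose t ht) (by linarith))
      (le_refl δ)
    intro t ht
    have := this t ht
    simpa using this
  have hδκ : δ ≤ ε / 4 / C1 := hd0
  have hδC1 : δ * C1 ≤ ε / 4 := by
    calc δ * C1 ≤ ε / 4 / C1 * C1 := by
          apply mul_le_mul_of_nonneg_right hδκ hC1pos.le
      _ = ε / 4 := div_mul_cancel₀ _ hC1pos.ne'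
  have hexp_le : ∀ t ∈ Icc 0 T, Real.exp ((L0 : ℝ) * t) ≤ C1 := by
    intro t ht
    apply Real.exp_le_exp.2
    exact mul_le_mul_of_nonneg_left ht.2 (by positivity)
  have hδnn : 0 ≤ δ := dist_nonneg
  have hbound : ∀ t ∈ Icc 0 T, δ * Real.exp (L0 * t) ≤ ε / 4 := by
    intro t ht
    calc δ * Real.exp (L0 * t) ≤ δ * C1 := mul_le_mul_of_nonneg_left (hexp_le t ht) hδnn
      _ ≤ ε / 4 := hδC1
  -- show the bad set is empty
  have hBempty : ∀ t ∈ Icc 0 T, dist (g t) (h t) ≤ ε / 2 := by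
    by_contra hcon
    push_neg at hcon
    obtain ⟨t₀, ht₀, ht₀d⟩ := hcon
    set B := {t : ℝ | t ∈ Icc 0 T ∧ ε / 2 < dist (g t) (h t)} with hB_def
    have hBne : B.Nonempty := ⟨t₀, ht₀, ht₀d⟩
    have hBsub : B ⊆ Icc 0 T := fun t ht => ht.1
    have hBbdd : BddBelow B := ⟨0, fun t ht => ht.1.1⟩
    set τ := sInf B with hτ_def
    have hτcl : τ ∈ closure B := csInf_mem_closure hBne hBbdd
    have hτIcc : τ ∈ Icc 0 T := isClosed_Icc.closure_subset ((closure_mono hBsub) hτcl)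
    have hτlb : ∀ t ∈ Ico 0 τ, dist (g t) (h t) ≤ ε / 2 := by
      intro t ht
      have htnB : t ∉ B := notMem_of_lt_csInf ht.2 hBbdd
      have htI : t ∈ Icc 0 T := ⟨ht.1, le_trans ht.2.le hτIcc.2⟩
      by_contra hlt
      push_neg at hlt
      exact htnB ⟨htI, hlt⟩
    have hτge : ε / 2 ≤ dist (g τ) (h τ) := by
      have hFc0 : ContinuousWithinAt (fun t => dist (g t) (h t)) (Icc 0 T) τ :=
        (hgc τ hτIcc).dist (hhc τ hτIcc)
      have hFc : ContinuousWithinAt (fun t => dist (g t) (h t)) B τ := hFc0.mono hBsub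
      have hne : (𝓝[B] τ).NeBot := mem_closure_iff_nhdsWithin_neBot.1 hτcl
      refine ge_of_tendsto hFc.tendsto ?_
      filter_upwards [eventually_mem_nhdsWithin] with t ht
      exact ht.2.le
    have := main τ hτIcc hτlb τ ⟨hτIcc.1, le_refl τ⟩
    have := le_trans this (hbound τ hτIcc)
    linarith
  -- final bound
  intro t ht
  have h1 := main T ⟨hT, le_refl T⟩ (fun u hu => hBempty u ⟨hu.1, hu.2.le⟩) t ht
  calc dist (g t) (h t) ≤ δ * Real.exp (L0 * t) := h1
    _ ≤ δ * C1 := mul_le_mul_of_nonneg_left (hexp_le t ht) hδnn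
    _ = C1 * δ := mul_comm _ _

end ODEAux

section FlowAux

variable {n : ℕ}

/-- Hypothesis bundle for the flow. -/
structure GoodFlow (X : Set (EuclideanSpace ℝ (Fin n)))
    (f : EuclideanSpace ℝ (Fin n) → EuclideanSpace ℝ (Fin n))
    (φ : ℝ → EuclideanSpace ℝ (Fin n) → EuclideanSpace ℝ (Fin n)) : Prop where
  locLip : ∀ x ∈ X, ∃ L : NNReal, ∃ U ∈ nhdsWithin x X, LipschitzOnWith L f U
  init : ∀ ξ ∈ X, φ 0 ξ = ξ
  memX : ∀ ξ ∈ X, ∀ t : ℝ, 0 ≤ t → φ t ξ ∈ X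
  ode : ∀ ξ ∈ X, ∀ t : ℝ, 0 ≤ t → HasDerivWithinAt (fun s => φ s ξ) (f (φ t ξ)) (Ici 0) t

namespace GoodFlow

variable {X : Set (EuclideanSpace ℝ (Fin n))}
  {f : EuclideanSpace ℝ (Fin n) → EuclideanSpace ℝ (Fin n)}
  {φ : ℝ → EuclideanSpace ℝ (Fin n) → EuclideanSpace ℝ (Fin n)}

theorem traj_contOn (h : GoodFlow X f φ) {ξ : EuclideanSpace ℝ (Fin n)} (hξ : ξ ∈ X) :
    ContinuousOn (fun t => φ t ξ) (Ici 0) := fun t ht =>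
  (h.ode ξ hξ t ht).continuousWithinAt

theorem traj_contOn_Icc (h : GoodFlow X f φ) {ξ : EuclideanSpace ℝ (Fin n)} (hξ : ξ ∈ X)
    (T : ℝ) : ContinuousOn (fun t => φ t ξ) (Icc 0 T) :=
  (h.traj_contOn hξ).mono (fun t ht => ht.1)

theorem traj_deriv (h : GoodFlow X f φ) {ξ : EuclideanSpace ℝ (Fin n)} (hξ : ξ ∈ X)
    {T : ℝ} : ∀ t ∈ Ico 0 T, HasDerivWithinAt (fun s => φ s ξ) (f (φ t ξ)) (Ici t) t :=
  fun t ht => (h.ode ξ hξ t ht.1).mono (Ici_subset_Ici.2 ht.1)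

/-- Uniqueness of solutions. -/
theorem uniq (h : GoodFlow X f φ) {ξ : EuclideanSpace ℝ (Fin n)} (hξ : ξ ∈ X)
    {T : ℝ} (hT : 0 ≤ T) {g : ℝ → EuclideanSpace ℝ (Fin n)}
    (hgc : ContinuousOn g (Icc 0 T)) (hgX : ∀ t ∈ Icc 0 T, g t ∈ X)
    (hgd : ∀ t ∈ Ico 0 T, HasDerivWithinAt g (f (g t)) (Ici t) t)
    (hg0 : g 0 = ξ) : ∀ t ∈ Icc 0 T, g t = φ t ξ := by
  obtain ⟨κ, hκ, C, hC, hmaster⟩ := master h.locLip hT (h.traj_contOn_Icc hξ T)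
    (fun t ht => h.memX ξ hξ t ht.1) (h.traj_deriv hξ)
  intro t ht
  have hd0 : dist (φ 0 ξ) (g 0) = 0 := by
    rw [h.init ξ hξ, hg0, dist_self]
  have := hmaster g hgc hgX hgd (by rw [hd0]; exact hκ.le) t ht
  rw [hd0, mul_zero] at this
  have := dist_le_zero.1 this
  exact this.symm

/-- The semiflow property. -/
theorem semiflow (h : GoodFlow X f φ) {ξ : EuclideanSpace ℝ (Fin n)} (hξ : ξ ∈ X)
    {s t : ℝ} (hs : 0 ≤ s) (ht : 0 ≤ t) : φ (t + s) ξ = φ t (φ s ξ) := by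
  have hη : φ s ξ ∈ X := h.memX ξ hξ s hs
  have key := h.uniq hη ht (g := fun u => φ (u + s) ξ) ?_ ?_ ?_ ?_
  · exact key t ⟨ht, le_refl t⟩
  · exact (h.traj_contOn hξ).comp (Continuous.continuousOn (by continuity))
      (fun u hu => by
        have : (0:ℝ) ≤ u + s := add_nonneg hu.1 hs
        exact this)
  · intro u hu
    exact h.memX ξ hξ (u + s) (add_nonneg hu.1 hs)
  · intro u hu
    have hF := h.ode ξ hξ (u + s) (add_nonneg hu.1 hs)
    have hι : HasDerivWithinAt (fun u' : ℝ => u' + s) 1 (Ici u) u :=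
      (hasDerivWithinAt_id u (Ici u)).add_const s
    have hmap : MapsTo (fun u' : ℝ => u' + s) (Ici u) (Ici 0) := fun u' hu' =>
      add_nonneg (le_trans hu.1 hu') hs
    have := hF.scomp u hι hmap
    rw [one_smul] at this
    exact this
  · show φ (0 + s) ξ = φ s ξ
    rw [zero_add]

/-- Continuity of the flow with respect to initial conditions, along sequences. -/
theorem flow_cont (h : GoodFlow X f φ) {ξ : EuclideanSpace ℝ (Fin n)} (hξ : ξ ∈ X)
    {s : ℝ} (hs : 0 ≤ s) {x : ℕ → EuclideanSpace ℝ (Fin n)} (hx : ∀ k, x k ∈ X)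
    (hlim : Tendsto x atTop (𝓝 ξ)) :
    Tendsto (fun k => φ s (x k)) atTop (𝓝 (φ s ξ)) := by
  obtain ⟨κ, hκ, C, hC, hmaster⟩ := master h.locLip hs (h.traj_contOn_Icc hξ s)
    (fun t ht => h.memX ξ hξ t ht.1) (h.traj_deriv hξ)
  rw [tendsto_iff_dist_tendsto_zero]
  apply squeeze_zero' (Eventually.of_forall (fun k => dist_nonneg))
    (g := fun k => C * dist ξ (x k))
  · have hev : ∀ᶠ k in atTop, dist ξ (x k) ≤ κ := by
      have := (tendsto_iff_dist_tendsto_zero.1 hlim)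
      filter_upwards [(this.eventually (ge_mem_nhds hκ) : _)] with k hk
      rw [dist_comm]; exact hk
    filter_upwards [hev] with k hk
    have := hmaster (fun t => φ t (x k)) (h.traj_contOn_Icc (hx k) s)
      (fun t ht => h.memX (x k) (hx k) t ht.1) (h.traj_deriv (hx k))
      (by simpa [h.init ξ hξ, h.init (x k) (hx k)] using hk) s ⟨hs, le_refl s⟩
    simp only [h.init ξ hξ, h.init (x k) (hx k)] at this
    rw [dist_comm]
    exact this
  · have : Tendsto (fun k => dist ξ (x k)) atTop (𝓝 0) := by
      have := tendsto_iff_dist_tendsto_zero.1 hlim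
      simpa [dist_comm] using this
    have := this.const_mul C
    simpa using this

end GoodFlow

end FlowAux

section DynAux

variable {n : ℕ} {K X : Set (EuclideanSpace ℝ (Fin n))}
  {f : EuclideanSpace ℝ (Fin n) → EuclideanSpace ℝ (Fin n)}
  {φ : ℝ → EuclideanSpace ℝ (Fin n) → EuclideanSpace ℝ (Fin n)}
  {v : EuclideanSpace ℝ (Fin n)}

/-- `f` is invariant under translations along `v`. -/
theorem f_trans_inv (hGF : GoodFlow X f φ)
    (hXtrans : ∀ x ∈ X, ∀ lam : ℝ, x + lam • v ∈ X)
    (htrans : ∀ ξ ∈ X, ∀ lam t : ℝ, 0 ≤ t → φ t (ξ + lam • v) = φ t ξ + lam • v)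
    {ξ : EuclideanSpace ℝ (Fin n)} (hξ : ξ ∈ X) (c : ℝ) :
    f (ξ + c • v) = f ξ := by
  have hξv : ξ + c • v ∈ X := hXtrans ξ hξ c
  have hA := hGF.ode (ξ + c • v) hξv 0 le_rfl
  have hB : HasDerivWithinAt (fun s => φ s ξ + c • v) (f (φ 0 (ξ + c • v))) (Ici 0) 0 := by
    apply hA.congr
    · intro y hy
      exact (htrans ξ hξ c y hy).symm
    · exact (htrans ξ hξ c 0 le_rfl).symm
  have hC : HasDerivWithinAt (fun s => φ s ξ + c • v) (f (φ 0 ξ)) (Ici 0) 0 :=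
    (hGF.ode ξ hξ 0 le_rfl).add_const (c • v)
  have hud : UniqueDiffWithinAt ℝ (Ici (0:ℝ)) 0 := uniqueDiffOn_Ici 0 0 self_mem_Ici
  have h1 := hB.derivWithin hud
  have h2 := hC.derivWithin hud
  rw [hGF.init ξ hξ] at h2
  rw [hGF.init (ξ + c • v) hξv] at h1
  rw [← h1, ← h2]

/-- Trajectories of equilibria of the projected system are translations along `v`. -/
theorem equilib_traj (hGF : GoodFlow X f φ)
    (hXtrans : ∀ x ∈ X, ∀ lam : ℝ, x + lam • v ∈ X)
    (htrans : ∀ ξ ∈ X, ∀ lam t : ℝ, 0 ≤ t → φ t (ξ + lam • v) = φ t ξ + lam • v)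
    {p : EuclideanSpace ℝ (Fin n)} (hp : p ∈ X) {r : ℝ} (hr : f p = r • v)
    {t : ℝ} (ht : 0 ≤ t) : φ t p = p + (t * r) • v := by
  have key := hGF.uniq hp ht (g := fun u => p + (u * r) • v) ?_ ?_ ?_ ?_
  · exact (key t ⟨ht, le_refl t⟩).symm
  · apply Continuous.continuousOn
    exact continuous_const.add ((continuous_id.mul continuous_const).smul continuous_const)
  · intro u hu
    exact hXtrans p hp (u * r)
  · intro u hu
    have hd : HasDerivWithinAt (fun u' : ℝ => p + (u' * r) • v) (r • v) (Ici u) u := by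
      have h1 : HasDerivWithinAt (fun u' : ℝ => u' * r) r (Ici u) u := by
        simpa using (hasDerivWithinAt_id u (Ici u)).mul_const r
      exact (h1.smul_const v).const_add p
    have he : f (p + (u * r) • v) = r • v := by
      rw [f_trans_inv hGF hXtrans htrans hp (u * r), hr]
    rw [he]
    exact hd
  · simp

/-- Weak monotonicity of the flow. -/
theorem monoW (hGC : GoodCone K v) (hGF : GoodFlow X f φ)
    (hmono : ∀ ξ₁ ∈ X, ∀ ξ₂ ∈ X, ∀ t : ℝ, 0 < t →
      ξ₁ - ξ₂ ∈ K → ξ₁ ≠ ξ₂ → φ t ξ₁ - φ t ξ₂ ∈ interior K)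
    {x y : EuclideanSpace ℝ (Fin n)} (hx : x ∈ X) (hy : y ∈ X) (hyx : y - x ∈ K)
    {t : ℝ} (ht : 0 ≤ t) : φ t y - φ t x ∈ K := by
  rcases eq_or_lt_of_le ht with rfl | htpos
  · rw [hGF.init x hx, hGF.init y hy]; exact hyx
  · rcases eq_or_ne y x with rfl | hne
    · rw [sub_self]; exact hGC.zero_mem
    · exact interior_subset (hmono y hy x hx t htpos hyx hne)

/-- `lmin` does not increase along pairs of trajectories. -/
theorem lmin_flow_le (hGC : GoodCone K v) (hGF : GoodFlow X f φ)
    (hXtrans : ∀ x ∈ X, ∀ lam : ℝ, x + lam • v ∈ X)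
    (hmono : ∀ ξ₁ ∈ X, ∀ ξ₂ ∈ X, ∀ t : ℝ, 0 < t →
      ξ₁ - ξ₂ ∈ K → ξ₁ ≠ ξ₂ → φ t ξ₁ - φ t ξ₂ ∈ interior K)
    (htrans : ∀ ξ ∈ X, ∀ lam t : ℝ, 0 ≤ t → φ t (ξ + lam • v) = φ t ξ + lam • v)
    {x y : EuclideanSpace ℝ (Fin n)} (hx : x ∈ X) (hy : y ∈ X)
    {t : ℝ} (ht : 0 ≤ t) :
    lmin K v (φ t y - φ t x) ≤ lmin K v (y - x) := by
  set l := lmin K v (y - x) with hl_def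
  have hl : l • v - (y - x) ∈ K := hGC.lmin_mem (y - x)
  have hmem : (x + l • v) - y ∈ K := by
    have he : (x + l • v) - y = l • v - (y - x) := by abel
    rw [he]; exact hl
  have hres := monoW hGC hGF hmono hy (hXtrans x hx l) hmem ht
  rw [htrans x hx l t ht] at hres
  apply hGC.lmin_le
  have he : l • v - (φ t y - φ t x) = (φ t x + l • v) - φ t y := by abel
  rw [he]; exact hres

/-- `lmin` strictly decreases along pairs of trajectories which are not `v`-translates. -/
theorem lmin_flow_lt (hGC : GoodCone K v) (hGF : GoodFlow X f φ)
    (hXtrans : ∀ x ∈ X, ∀ lam : ℝ, x + lam • v ∈ X)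
    (hmono : ∀ ξ₁ ∈ X, ∀ ξ₂ ∈ X, ∀ t : ℝ, 0 < t →
      ξ₁ - ξ₂ ∈ K → ξ₁ ≠ ξ₂ → φ t ξ₁ - φ t ξ₂ ∈ interior K)
    (htrans : ∀ ξ ∈ X, ∀ lam t : ℝ, 0 ≤ t → φ t (ξ + lam • v) = φ t ξ + lam • v)
    {x y : EuclideanSpace ℝ (Fin n)} (hx : x ∈ X) (hy : y ∈ X)
    (hne : y ≠ x + lmin K v (y - x) • v)
    {t : ℝ} (ht : 0 < t) :
    lmin K v (φ t y - φ t x) < lmin K v (y - x) := by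
  set l := lmin K v (y - x) with hl_def
  have hl : l • v - (y - x) ∈ K := hGC.lmin_mem (y - x)
  have hmem : (x + l • v) - y ∈ K := by
    have he : (x + l • v) - y = l • v - (y - x) := by abel
    rw [he]; exact hl
  have hres := hmono (x + l • v) (hXtrans x hx l) y hy t ht hmem (fun hc => hne hc.symm)
  rw [htrans x hx l t ht.le] at hres
  apply hGC.lmin_lt_of_interior
  have he : l • v - (φ t y - φ t x) = (φ t x + l • v) - φ t y := by abel
  rw [he]; exact hres

/-- The pseudo-distance strictly decreases when the pair is not a `v`-translate. -/
theorem dd_flow_lt (hGC : GoodCone K v) (hGF : GoodFlow X f φ)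
    (hXtrans : ∀ x ∈ X, ∀ lam : ℝ, x + lam • v ∈ X)
    (hmono : ∀ ξ₁ ∈ X, ∀ ξ₂ ∈ X, ∀ t : ℝ, 0 < t →
      ξ₁ - ξ₂ ∈ K → ξ₁ ≠ ξ₂ → φ t ξ₁ - φ t ξ₂ ∈ interior K)
    (htrans : ∀ ξ ∈ X, ∀ lam t : ℝ, 0 ≤ t → φ t (ξ + lam • v) = φ t ξ + lam • v)
    {x y : EuclideanSpace ℝ (Fin n)} (hx : x ∈ X) (hy : y ∈ X)
    (hdd : lmin K v (y - x) + lmin K v (x - y) ≠ 0)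
    {t : ℝ} (ht : 0 < t) :
    lmin K v (φ t y - φ t x) + lmin K v (φ t x - φ t y)
      < lmin K v (y - x) + lmin K v (x - y) := by
  set l := lmin K v (y - x) with hl_def
  have hne : y ≠ x + l • v := by
    intro hc
    apply hdd
    have hxy : x - y = 0 + (-l) • v := by
      rw [hc, neg_smul]; abel
    rw [hxy, hGC.lmin_add_smul 0 (-l), hGC.lmin_zero]
    ring
  have h1 := lmin_flow_lt hGC hGF hXtrans hmono htrans hx hy hne ht
  have h2 := lmin_flow_le hGC hGF hXtrans hmono htrans hy hx (x := y) (y := x) ht.le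
  linarith

/-- If the projected equilibrium `q` is not a `v`-translate of `p` above it, its speed is slower. -/
theorem rate_lt (hGC : GoodCone K v) (hGF : GoodFlow X f φ)
    (hXtrans : ∀ x ∈ X, ∀ lam : ℝ, x + lam • v ∈ X)
    (hmono : ∀ ξ₁ ∈ X, ∀ ξ₂ ∈ X, ∀ t : ℝ, 0 < t →
      ξ₁ - ξ₂ ∈ K → ξ₁ ≠ ξ₂ → φ t ξ₁ - φ t ξ₂ ∈ interior K)
    (htrans : ∀ ξ ∈ X, ∀ lam t : ℝ, 0 ≤ t → φ t (ξ + lam • v) = φ t ξ + lam • v)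
    {p q : EuclideanSpace ℝ (Fin n)} {rp rq : ℝ} (hp : p ∈ X) (hq : q ∈ X)
    (hfp : f p = rp • v) (hfq : f q = rq • v)
    (hne : q ≠ p + lmin K v (q - p) • v) : rq < rp := by
  set l := lmin K v (q - p) with hl_def
  have hl : l • v - (q - p) ∈ K := hGC.lmin_mem (q - p)
  have hmem : (p + l • v) - q ∈ K := by
    have he : (p + l • v) - q = l • v - (q - p) := by abel
    rw [he]; exact hl
  have hint := hmono (p + l • v) (hXtrans p hp l) q hq 1 one_pos hmem
    (fun hc => hne hc.symm)
  rw [htrans p hp l 1 zero_le_one,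
    equilib_traj hGF hXtrans htrans hp hfp zero_le_one,
    equilib_traj hGF hXtrans htrans hq hfq zero_le_one] at hint
  have he : (l + rp - rq) • v - (q - p) = (p + ((1:ℝ) * rp) • v + l • v) - (q + ((1:ℝ) * rq) • v) := by
    rw [one_mul, one_mul, sub_smul, add_smul]
    abel
  have hlt : lmin K v (q - p) < l + rp - rq := by
    apply hGC.lmin_lt_of_interior
    rw [he]; exact hint
  rw [← hl_def] at hlt
  linarith

/-- Uniqueness of the projected equilibrium. -/
theorem equilib_unique (hGC : GoodCone K v) (hGF : GoodFlow X f φ)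
    (hXtrans : ∀ x ∈ X, ∀ lam : ℝ, x + lam • v ∈ X)
    (hmono : ∀ ξ₁ ∈ X, ∀ ξ₂ ∈ X, ∀ t : ℝ, 0 < t →
      ξ₁ - ξ₂ ∈ K → ξ₁ ≠ ξ₂ → φ t ξ₁ - φ t ξ₂ ∈ interior K)
    (htrans : ∀ ξ ∈ X, ∀ lam t : ℝ, 0 ≤ t → φ t (ξ + lam • v) = φ t ξ + lam • v) :
    ∀ p₁ p₂ : EuclideanSpace ℝ (Fin n),
      p₁ ∈ X → (inner ℝ v p₁ : ℝ) = 0 → (∃ r : ℝ, f p₁ = r • v) →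
      p₂ ∈ X → (inner ℝ v p₂ : ℝ) = 0 → (∃ r : ℝ, f p₂ = r • v) → p₁ = p₂ := by
  have hvv : (inner ℝ v v : ℝ) = 1 := by
    rw [real_inner_self_eq_norm_mul_norm, hGC.vnorm]; norm_num
  have hinner : ∀ {a b : EuclideanSpace ℝ (Fin n)} {c : ℝ}, (inner ℝ v a : ℝ) = 0 →
      (inner ℝ v b : ℝ) = 0 → b = a + c • v → b = a := by
    intro a b c ha hb hab
    have h0 : (inner ℝ v b : ℝ) = inner ℝ v a + c * (inner ℝ v v : ℝ) := by
      rw [hab, inner_add_right, real_inner_smul_right]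
    rw [ha, hb, hvv] at h0
    have : c = 0 := by linarith
    rw [hab, this, zero_smul, add_zero]
  intro p₁ p₂ hp₁ hip₁ ⟨r₁, hr₁⟩ hp₂ hip₂ ⟨r₂, hr₂⟩
  by_cases h1 : p₂ = p₁ + lmin K v (p₂ - p₁) • v
  · exact (hinner hip₁ hip₂ h1).symm
  by_cases h2 : p₁ = p₂ + lmin K v (p₁ - p₂) • v
  · exact hinner hip₂ hip₁ h2
  exfalso
  have hA := rate_lt hGC hGF hXtrans hmono htrans hp₁ hp₂ hr₁ hr₂ h1
  have hB := rate_lt hGC hGF hXtrans hmono htrans hp₂ hp₁ hr₂ hr₁ h2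
  linarith

end DynAux

section ClusterAux

variable {n : ℕ} {K X : Set (EuclideanSpace ℝ (Fin n))}
  {f : EuclideanSpace ℝ (Fin n) → EuclideanSpace ℝ (Fin n)}
  {φ : ℝ → EuclideanSpace ℝ (Fin n) → EuclideanSpace ℝ (Fin n)}
  {v : EuclideanSpace ℝ (Fin n)}

theorem piProj_eq_add (v x : EuclideanSpace ℝ (Fin n)) :
    piProj v x = x + (-(inner ℝ v x : ℝ)) • v := by
  rw [piProj, neg_smul, ← sub_eq_add_neg]

theorem cluster_equilib (hGC : GoodCone K v) (hGF : GoodFlow X f φ)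
    (hXclosed : IsClosed X)
    (hXtrans : ∀ x ∈ X, ∀ lam : ℝ, x + lam • v ∈ X)
    (hmono : ∀ ξ₁ ∈ X, ∀ ξ₂ ∈ X, ∀ t : ℝ, 0 < t →
      ξ₁ - ξ₂ ∈ K → ξ₁ ≠ ξ₂ → φ t ξ₁ - φ t ξ₂ ∈ interior K)
    (htrans : ∀ ξ ∈ X, ∀ lam t : ℝ, 0 ≤ t → φ t (ξ + lam • v) = φ t ξ + lam • v)
    {ξ : EuclideanSpace ℝ (Fin n)} (hξ : ξ ∈ X)
    {q : EuclideanSpace ℝ (Fin n)} {u : ℕ → ℝ} (hu0 : ∀ k, 0 ≤ u k)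
    (huT : Tendsto u atTop atTop)
    (hq : Tendsto (fun k => piProj v (φ (u k) ξ)) atTop (𝓝 q)) :
    q ∈ X ∧ (inner ℝ v q : ℝ) = 0 ∧ ∃ r : ℝ, f q = r • v := by
  have hvv : (inner ℝ v v : ℝ) = 1 := by
    rw [real_inner_self_eq_norm_mul_norm, hGC.vnorm]; norm_num
  set c : ℕ → ℝ := fun k => (inner ℝ v (φ (u k) ξ) : ℝ) with hc_def
  set pk : ℕ → EuclideanSpace ℝ (Fin n) := fun k => piProj v (φ (u k) ξ) with hpk_def
  have hpk_eq : ∀ k, pk k = φ (u k) ξ + (-(c k)) • v := fun k => piProj_eq_add v _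
  have hpkX : ∀ k, pk k ∈ X := fun k => by
    rw [hpk_eq k]
    exact hXtrans _ (hGF.memX ξ hξ (u k) (hu0 k)) _
  have hqX : q ∈ X := hXclosed.mem_of_tendsto hq (Eventually.of_forall hpkX)
  have hiq : (inner ℝ v q : ℝ) = 0 := by
    have h1 : Tendsto (fun k => (inner ℝ v (pk k) : ℝ)) atTop (𝓝 (inner ℝ v q : ℝ)) :=
      (Tendsto.inner tendsto_const_nhds hq)
    have h2 : ∀ k, (inner ℝ v (pk k) : ℝ) = 0 := by
      intro k
      rw [hpk_eq k, inner_add_right, real_inner_smul_right, hvv, hc_def]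
      ring
    have h3 : Tendsto (fun k => (inner ℝ v (pk k) : ℝ)) atTop (𝓝 0) := by
      simp only [h2]; exact tendsto_const_nhds
    exact tendsto_nhds_unique h1 h3
  refine ⟨hqX, hiq, ?_⟩
  -- the key step : `φ s q` is a `v`-translate of `q` for every `s > 0`
  have hkey : ∀ s : ℝ, 0 < s → φ s q - q = lmin K v (φ s q - q) • v := by
    intro s hs
    have hη : φ s ξ ∈ X := hGF.memX ξ hξ s hs.le
    set η := φ s ξ with hη_def
    set G : ℝ → ℝ := fun t => lmin K v (φ t η - φ t ξ) + lmin K v (φ t ξ - φ t η) with hG_def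
    have hanti2 : ∀ t₁ t₂ : ℝ, 0 ≤ t₁ → t₁ ≤ t₂ → G t₂ ≤ G t₁ := by
      intro t₁ t₂ ht₁ h12
      have hd : 0 ≤ t₂ - t₁ := sub_nonneg.2 h12
      have e1 : φ t₂ ξ = φ (t₂ - t₁) (φ t₁ ξ) := by
        have := hGF.semiflow hξ ht₁ hd
        rwa [sub_add_cancel] at this
      have e2 : φ t₂ η = φ (t₂ - t₁) (φ t₁ η) := by
        have := hGF.semiflow hη ht₁ hd
        rwa [sub_add_cancel] at this
      have hx1 : φ t₁ ξ ∈ X := hGF.memX ξ hξ t₁ ht₁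
      have hy1 : φ t₁ η ∈ X := hGF.memX η hη t₁ ht₁
      have hle1 := lmin_flow_le hGC hGF hXtrans hmono htrans hx1 hy1 (t := t₂ - t₁) hd
      have hle2 := lmin_flow_le hGC hGF hXtrans hmono htrans hy1 hx1 (t := t₂ - t₁) hd
      rw [hG_def]
      simp only []
      rw [e1, e2]
      exact add_le_add hle1 hle2
    set G' : ℝ → ℝ := fun t => G (max t 0) with hG'_def
    have hantiG' : Antitone G' := by
      intro t₁ t₂ h12
      exact hanti2 (max t₁ 0) (max t₂ 0) (le_max_right t₁ 0) (max_le_max h12 le_rfl)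
    have hbdd : BddBelow (range G') := by
      refine ⟨0, fun y hy => ?_⟩
      obtain ⟨t, rfl⟩ := hy
      exact hGC.dd_nonneg (φ (max t 0) ξ) (φ (max t 0) η)
    set δ := ⨅ t, G' t with hδ_def
    have hδ' : Tendsto G' atTop (𝓝 δ) := tendsto_atTop_ciInf hantiG' hbdd
    have hGδ : Tendsto G atTop (𝓝 δ) := by
      apply hδ'.congr'
      filter_upwards [eventually_ge_atTop (0:ℝ)] with t ht
      rw [hG'_def]
      simp only []
      rw [max_eq_left ht]
    have claim : ∀ w : ℝ, 0 ≤ w →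
        lmin K v (φ w (φ s q) - φ w q) + lmin K v (φ w q - φ w (φ s q)) = δ := by
      intro w hw
      set x1 : ℕ → EuclideanSpace ℝ (Fin n) := fun k => φ w (pk k) with hx1_def
      set x2 : ℕ → EuclideanSpace ℝ (Fin n) := fun k => φ w (φ s (pk k)) with hx2_def
      have hx1lim : Tendsto x1 atTop (𝓝 (φ w q)) := hGF.flow_cont hqX hw hpkX hq
      have hspkX : ∀ k, φ s (pk k) ∈ X := fun k => hGF.memX _ (hpkX k) s hs.le
      have hsqlim : Tendsto (fun k => φ s (pk k)) atTop (𝓝 (φ s q)) :=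
        hGF.flow_cont hqX hs.le hpkX hq
      have hx2lim : Tendsto x2 atTop (𝓝 (φ w (φ s q))) :=
        hGF.flow_cont (hGF.memX q hqX s hs.le) hw hspkX hsqlim
      have hid : ∀ k, x2 k - x1 k = φ (w + u k) η - φ (w + u k) ξ := by
        intro k
        have huk := hu0 k
        have hXuk : φ (u k) ξ ∈ X := hGF.memX ξ hξ (u k) huk
        have h1 : x1 k = φ (w + u k) ξ + (-(c k)) • v := by
          rw [hx1_def]
          simp only []
          rw [hpk_eq k, htrans _ hXuk (-(c k)) w hw, ← hGF.semiflow hξ huk hw]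
        have hsuk : φ s (pk k) = φ (s + u k) ξ + (-(c k)) • v := by
          rw [hpk_eq k, htrans _ hXuk (-(c k)) s hs.le, ← hGF.semiflow hξ huk hs.le]
        have hXsuk : φ (s + u k) ξ ∈ X := hGF.memX ξ hξ _ (add_nonneg hs.le huk)
        have h2 : x2 k = φ (w + (s + u k)) ξ + (-(c k)) • v := by
          rw [hx2_def]
          simp only []
          rw [hsuk, htrans _ hXsuk (-(c k)) w hw,
            ← hGF.semiflow hξ (add_nonneg hs.le huk) hw]
        have h3 : φ (w + u k) η = φ (w + (s + u k)) ξ := by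
          have h4 := hGF.semiflow hξ hs.le (add_nonneg hw huk)
          rw [show w + u k + s = w + (s + u k) by ring] at h4
          exact h4.symm
        rw [h1, h2, h3]
        abel
      have hid2 : ∀ k, x1 k - x2 k = φ (w + u k) ξ - φ (w + u k) η := by
        intro k
        rw [← neg_sub (x2 k) (x1 k), hid k, neg_sub]
      have hGuk : Tendsto (fun k => G (w + u k)) atTop (𝓝 δ) :=
        hGδ.comp (tendsto_atTop_add_const_left atTop w huT)
      have hGuk' : Tendsto (fun k => lmin K v (x2 k - x1 k) + lmin K v (x1 k - x2 k))
          atTop (𝓝 δ) := by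
        apply Tendsto.congr _ hGuk
        intro k
        rw [hG_def]
        simp only []
        rw [hid k, hid2 k]
      have hlim2 : Tendsto (fun k => lmin K v (x2 k - x1 k) + lmin K v (x1 k - x2 k)) atTop
          (𝓝 (lmin K v (φ w (φ s q) - φ w q) + lmin K v (φ w q - φ w (φ s q)))) := by
        exact ((hGC.lmin_continuous.tendsto _).comp (hx2lim.sub hx1lim)).add
          ((hGC.lmin_continuous.tendsto _).comp (hx1lim.sub hx2lim))
      exact tendsto_nhds_unique hlim2 hGuk'
    have hdd0 : lmin K v (φ s q - q) + lmin K v (q - φ s q) = δ := by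
      have := claim 0 le_rfl
      rwa [hGF.init q hqX, hGF.init (φ s q) (hGF.memX q hqX s hs.le)] at this
    have hδ0 : lmin K v (φ s q - q) + lmin K v (q - φ s q) = 0 := by
      by_contra hne
      have hlt := dd_flow_lt hGC hGF hXtrans hmono htrans hqX
        (hGF.memX q hqX s hs.le) hne hs
      rw [hdd0] at hlt
      have := claim s hs.le
      rw [this] at hlt
      exact lt_irrefl δ hlt
    exact hGC.eq_smul_of_dd_zero hδ0
  -- conclude `f q ∈ span {v}`
  have hspan : ∀ s : ℝ, 0 < s → φ s q - q ∈ Submodule.span ℝ ({v} : Set (EuclideanSpace ℝ (Fin n))) := by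
    intro s hs
    rw [hkey s hs]
    exact Submodule.smul_mem _ _ (Submodule.mem_span_singleton_self v)
  have hder := hGF.ode q hqX 0 le_rfl
  rw [hGF.init q hqX] at hder
  rw [hasDerivWithinAt_iff_tendsto_slope] at hder
  have hIoi : (Ici (0:ℝ)) \ {0} = Ioi 0 := Ici_sdiff_left
  rw [hIoi] at hder
  have hmem : f q ∈ Submodule.span ℝ ({v} : Set (EuclideanSpace ℝ (Fin n))) := by
    have hclosed : IsClosed (Submodule.span ℝ ({v} : Set (EuclideanSpace ℝ (Fin n))) :
        Set (EuclideanSpace ℝ (Fin n))) :=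
      Submodule.closed_of_finiteDimensional _
    apply hclosed.mem_of_tendsto hder
    filter_upwards [self_mem_nhdsWithin] with t ht
    have : slope (fun s => φ s q) 0 t = (t - 0)⁻¹ • (φ t q - φ 0 q) := by
      rw [slope_def_module]
    rw [this, sub_zero, hGF.init q hqX]
    exact Submodule.smul_mem _ _ (hspan t ht)
  obtain ⟨r, hr⟩ := Submodule.mem_span_singleton.1 hmem
  exact ⟨r, hr.symm⟩

end ClusterAux

/-- a strongly monotone, forward complete system `ẋ = f(x)` on `X`,
translation invariant along the unit vector `v ∈ interior K`, with `X` closed and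
invariant under translations by `v`, is such that every solution bounded modulo `v`
has `π_v(φ_t(ξ))` converging to an equilibrium `p ∈ X ∩ v^⊥` of the projected system
(`f(p) ∈ span{v}`); moreover this equilibrium is unique. -/
theorem stmt0 {n : ℕ} (K X : Set (EuclideanSpace ℝ (Fin n)))
    (f : EuclideanSpace ℝ (Fin n) → EuclideanSpace ℝ (Fin n))
    (φ : ℝ → EuclideanSpace ℝ (Fin n) → EuclideanSpace ℝ (Fin n))
    (v : EuclideanSpace ℝ (Fin n))
    -- K is a closed pointed convex cone with nonempty interior
    (hKclosed : IsClosed K) (hKconv : Convex ℝ K)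
    (hKcone : ∀ c : ℝ, 0 ≤ c → ∀ x ∈ K, c • x ∈ K)
    (hKpointed : ∀ x ∈ K, -x ∈ K → x = 0)
    (hv : v ∈ interior K) (hvnorm : ‖v‖ = 1)
    -- X is closed, the closure of its interior, and invariant under translations by v
    (hXclosed : IsClosed X) (hXreg : X = closure (interior X))
    (hXtrans : ∀ x ∈ X, ∀ lam : ℝ, x + lam • v ∈ X)
    -- f is locally Lipschitz on X
    (hf : ∀ x ∈ X, ∃ L : NNReal, ∃ U ∈ nhdsWithin x X, LipschitzOnWith L f U)
    -- φ is the forward complete flow of ẋ = f(x) on X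
    (hφ0 : ∀ ξ ∈ X, φ 0 ξ = ξ)
    (hφX : ∀ ξ ∈ X, ∀ t : ℝ, 0 ≤ t → φ t ξ ∈ X)
    (hφode : ∀ ξ ∈ X, ∀ t : ℝ, 0 ≤ t →
      HasDerivWithinAt (fun s => φ s ξ) (f (φ t ξ)) (Set.Ici 0) t)
    -- strong monotonicity: ξ₁ ≻ ξ₂ ⟹ φ_t(ξ₁) ≫ φ_t(ξ₂) for t > 0
    (hmono : ∀ ξ₁ ∈ X, ∀ ξ₂ ∈ X, ∀ t : ℝ, 0 < t →
      ξ₁ - ξ₂ ∈ K → ξ₁ ≠ ξ₂ → φ t ξ₁ - φ t ξ₂ ∈ interior K)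
    -- translation invariance along v
    (htrans : ∀ ξ ∈ X, ∀ lam t : ℝ, 0 ≤ t → φ t (ξ + lam • v) = φ t ξ + lam • v) :
    -- every solution bounded modulo v has π_v(φ_t(ξ)) converging to an equilibrium
    (∀ ξ ∈ X, (∃ M : ℝ, ∀ t : ℝ, 0 ≤ t → ‖piProj v (φ t ξ)‖ ≤ M) →
      ∃ p : EuclideanSpace ℝ (Fin n), p ∈ X ∧ (inner ℝ v p : ℝ) = 0 ∧
        (∃ r : ℝ, f p = r • v) ∧
        Tendsto (fun t => piProj v (φ t ξ)) atTop (𝓝 p)) ∧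
    -- moreover, the equilibrium of the projected system is unique
    (∀ p₁ p₂ : EuclideanSpace ℝ (Fin n),
      p₁ ∈ X → (inner ℝ v p₁ : ℝ) = 0 → (∃ r : ℝ, f p₁ = r • v) →
      p₂ ∈ X → (inner ℝ v p₂ : ℝ) = 0 → (∃ r : ℝ, f p₂ = r • v) → p₁ = p₂) := by
  have hGC : GoodCone K v := ⟨hKclosed, hKconv, hKcone, hKpointed, hv, hvnorm⟩
  have hGF : GoodFlow X f φ := ⟨hf, hφ0, hφX, hφode⟩
  have huniq := equilib_unique hGC hGF hXtrans hmono htrans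
  refine ⟨?_, huniq⟩
  rintro ξ hξ ⟨M, hM⟩
  have hball : ∀ t : ℝ, 0 ≤ t → piProj v (φ t ξ) ∈
      Metric.closedBall (0 : EuclideanSpace ℝ (Fin n)) M := by
    intro t ht
    rw [Metric.mem_closedBall, dist_zero_right]
    exact hM t ht
  obtain ⟨q, hqcl, σ, hσ, hconv⟩ := tendsto_subseq_of_bounded Metric.isBounded_closedBall
    (x := fun k : ℕ => piProj v (φ (k : ℝ) ξ)) (fun k => hball _ (Nat.cast_nonneg k))
  have hu0 : ∀ k, (0:ℝ) ≤ ((σ k : ℕ) : ℝ) := fun k => Nat.cast_nonneg _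
  have huT : Tendsto (fun k => ((σ k : ℕ) : ℝ)) atTop atTop :=
    tendsto_natCast_atTop_atTop.comp hσ.tendsto_atTop
  have hqe := cluster_equilib hGC hGF hXclosed hXtrans hmono htrans hξ hu0 huT hconv
  obtain ⟨hqX, hqi, hqr⟩ := hqe
  refine ⟨q, hqX, hqi, hqr, ?_⟩
  by_contra hcon
  rw [Metric.tendsto_atTop] at hcon
  push_neg at hcon
  obtain ⟨ε, hε, hcon⟩ := hcon
  choose w hw1 hw2 using hcon
  set ws : ℕ → ℝ := fun k => w (k : ℝ) with hws_def
  have hws0 : ∀ k : ℕ, (0:ℝ) ≤ ws k := fun k => le_trans (Nat.cast_nonneg k) (hw1 _)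
  obtain ⟨q', hq'cl, σ', hσ', hconv'⟩ := tendsto_subseq_of_bounded Metric.isBounded_closedBall
    (x := fun k : ℕ => piProj v (φ (ws k) ξ)) (fun k => hball _ (hws0 k))
  have hu0' : ∀ k, 0 ≤ ws (σ' k) := fun k => hws0 _
  have huT' : Tendsto (fun k => ws (σ' k)) atTop atTop := by
    apply tendsto_atTop_mono (fun k => hw1 ((σ' k : ℕ) : ℝ))
      (tendsto_natCast_atTop_atTop.comp hσ'.tendsto_atTop)
  have hqe' := cluster_equilib hGC hGF hXclosed hXtrans hmono htrans hξ hu0' huT' hconv'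
  obtain ⟨hq'X, hq'i, hq'r⟩ := hqe'
  have heq : q = q' := huniq q q' hqX hqi hqr hq'X hq'i hq'r
  have hdist : ε ≤ dist q' q := by
    have h1 : Tendsto (fun k => dist (piProj v (φ (ws (σ' k)) ξ)) q) atTop (𝓝 (dist q' q)) :=
      hconv'.dist tendsto_const_nhds
    apply ge_of_tendsto h1
    filter_upwards with k using hw2 _
  rw [← heq, dist_self] at hdist
  linarith
end

section
/- Let the forward complete system ẋ = f(x) on X be strongly monotone in reversed time (for all ξ₁, ξ₂ ∈ X and all t > 0, φ_t(ξ₁) ≻ φ_t(ξ₂) implies ξ₁ ≫ ξ₂) and translation invariant along the unit vector v ∈ interior(K), with X closed and invariant under translations by v. Then every solution φ_t(ξ) that is bounded modulo v is such that π_v(φ_t(ξ)) converges as t → ∞ to a point p ∈ X ∩ v^⊥ with f(p) ∈ span{v}, and this equilibrium p is unique. -/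
open Filter Topology Set

namespace Stmt1Aux

variable {n : ℕ}

/-- `lam K v z` is the smallest `l` such that `z + l • v ∈ K`. -/
noncomputable def lam (K : Set (EuclideanSpace ℝ (Fin n)))
    (v z : EuclideanSpace ℝ (Fin n)) : ℝ :=
  sInf {l : ℝ | z + l • v ∈ K}

section Cone

variable {K : Set (EuclideanSpace ℝ (Fin n))} {v : EuclideanSpace ℝ (Fin n)} {ε : ℝ}

theorem kadd (hconv : Convex ℝ K)
    (hcone : ∀ c : ℝ, 0 ≤ c → ∀ x ∈ K, c • x ∈ K)
    {x y : EuclideanSpace ℝ (Fin n)} (hx : x ∈ K) (hy : y ∈ K) : x + y ∈ K := by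
  have h2 : ((2:ℝ)) • ((1/2 : ℝ) • x + (1/2 : ℝ) • y) ∈ K := by
    apply hcone 2 (by norm_num)
    exact hconv hx hy (by norm_num) (by norm_num) (by norm_num)
  have : ((2:ℝ)) • ((1/2 : ℝ) • x + (1/2 : ℝ) • y) = x + y := by
    rw [smul_add, smul_smul, smul_smul]; norm_num
  rwa [this] at h2

theorem norm_div_mem (hcone : ∀ c : ℝ, 0 ≤ c → ∀ x ∈ K, c • x ∈ K)
    (hball : Metric.closedBall v ε ⊆ K) (hε : 0 < ε)
    (z : EuclideanSpace ℝ (Fin n)) : z + (‖z‖ / ε) • v ∈ K := by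
  rcases eq_or_ne z 0 with rfl | hz
  · have hv : v ∈ K := hball (Metric.mem_closedBall_self hε.le)
    simpa using hcone 0 le_rfl v hv
  · have hnz : (0:ℝ) < ‖z‖ := norm_pos_iff.mpr hz
    have hc : (0:ℝ) < ‖z‖ / ε := div_pos hnz hε
    have hmem : v + (ε / ‖z‖) • z ∈ K := by
      apply hball
      rw [Metric.mem_closedBall, dist_eq_norm]
      have : v + (ε / ‖z‖) • z - v = (ε / ‖z‖) • z := by abel
      rw [this, norm_smul]
      simp only [Real.norm_eq_abs, abs_of_pos (div_pos hε hnz)]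
      rw [div_mul_cancel₀ _ hnz.ne']
    have := hcone (‖z‖ / ε) hc.le _ hmem
    have heq : (‖z‖ / ε) • (v + (ε / ‖z‖) • z) = (‖z‖ / ε) • v + z := by
      rw [smul_add, smul_smul]
      rw [div_mul_div_comm, mul_comm, ← div_mul_div_comm, div_self hnz.ne',
        div_self hε.ne', one_mul, one_smul]
    rw [heq] at this
    rwa [add_comm]

theorem le_of_mem_lamSet (hcone : ∀ c : ℝ, 0 ≤ c → ∀ x ∈ K, c • x ∈ K)
    (hpointed : ∀ x ∈ K, -x ∈ K → x = 0)
    (hball : Metric.closedBall v ε ⊆ K) (hε : 0 < ε) (hε2 : ε ≤ 1/2)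
    (hvnorm : ‖v‖ = 1) {z : EuclideanSpace ℝ (Fin n)} {l : ℝ}
    (hl : z + l • v ∈ K) : -(‖z‖ / ε) ≤ l := by
  by_contra hlt
  push_neg at hlt
  have hlneg : 0 < -l := by
    have : 0 ≤ ‖z‖ / ε := div_nonneg (norm_nonneg _) hε.le
    linarith
  set w : EuclideanSpace ℝ (Fin n) := (-l)⁻¹ • z with hw
  have hwnorm : ‖w‖ < ε := by
    rw [hw, norm_smul, Real.norm_eq_abs, abs_of_pos (inv_pos.mpr hlneg)]
    have h : ‖z‖ / ε < -l := by linarith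
    have h2 : ‖z‖ < -l * ε := by
      calc ‖z‖ = (‖z‖/ε)*ε := by field_simp
      _ < (-l)*ε := mul_lt_mul_of_pos_right h hε
    calc (-l)⁻¹ * ‖z‖ < (-l)⁻¹ * (-l*ε) :=
          mul_lt_mul_of_pos_left h2 (inv_pos.mpr hlneg)
    _ = ε := by rw [← mul_assoc, inv_mul_cancel₀ (by linarith : (-l) ≠ 0), one_mul]
  have h1 : w - v ∈ K := by
    have := hcone (-l)⁻¹ (inv_pos.mpr hlneg).le _ hl
    have heq : (-l)⁻¹ • (z + l • v) = w - v := by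
      rw [smul_add, smul_smul]
      rw [show (-l)⁻¹ * l = -1 by rw [inv_neg, neg_mul, inv_mul_cancel₀ (by linarith : l ≠ 0)]]
      rw [hw]; simp [sub_eq_add_neg]
    rwa [heq] at this
  have h2 : v - w ∈ K := by
    apply hball
    rw [Metric.mem_closedBall, dist_eq_norm]
    have : v - w - v = -w := by abel
    rw [this, norm_neg]
    exact hwnorm.le
  have h3 : w - v = 0 := by
    apply hpointed _ h1
    rwa [neg_sub]
  have : w = v := by rwa [sub_eq_zero] at h3
  rw [this, hvnorm] at hwnorm
  linarith

/-- The defining set of `lam` is nonempty, bounded below and closed;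
so `lam` is attained. -/
theorem lam_mem (hclosed : IsClosed K) (hconv : Convex ℝ K)
    (hcone : ∀ c : ℝ, 0 ≤ c → ∀ x ∈ K, c • x ∈ K)
    (hpointed : ∀ x ∈ K, -x ∈ K → x = 0)
    (hball : Metric.closedBall v ε ⊆ K) (hε : 0 < ε) (hε2 : ε ≤ 1/2)
    (hvnorm : ‖v‖ = 1) (z : EuclideanSpace ℝ (Fin n)) :
    z + (lam K v z) • v ∈ K := by
  have hne : {l : ℝ | z + l • v ∈ K}.Nonempty :=
    ⟨‖z‖ / ε, norm_div_mem hcone hball hε z⟩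
  have hbdd : BddBelow {l : ℝ | z + l • v ∈ K} :=
    ⟨-(‖z‖ / ε), fun l hl => le_of_mem_lamSet hcone hpointed hball hε hε2 hvnorm hl⟩
  have hcl : IsClosed {l : ℝ | z + l • v ∈ K} := by
    have : Continuous fun l : ℝ => z + l • v :=
      continuous_const.add (continuous_id.smul continuous_const)
    exact hclosed.preimage this
  exact hcl.csInf_mem hne hbdd

theorem lam_bddBelow (hcone : ∀ c : ℝ, 0 ≤ c → ∀ x ∈ K, c • x ∈ K)
    (hpointed : ∀ x ∈ K, -x ∈ K → x = 0)
    (hball : Metric.closedBall v ε ⊆ K) (hε : 0 < ε) (hε2 : ε ≤ 1/2)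
    (hvnorm : ‖v‖ = 1) (z : EuclideanSpace ℝ (Fin n)) :
    BddBelow {l : ℝ | z + l • v ∈ K} :=
  ⟨-(‖z‖ / ε), fun l hl => le_of_mem_lamSet hcone hpointed hball hε hε2 hvnorm hl⟩

theorem lam_le (hcone : ∀ c : ℝ, 0 ≤ c → ∀ x ∈ K, c • x ∈ K)
    (hpointed : ∀ x ∈ K, -x ∈ K → x = 0)
    (hball : Metric.closedBall v ε ⊆ K) (hε : 0 < ε) (hε2 : ε ≤ 1/2)
    (hvnorm : ‖v‖ = 1) {z : EuclideanSpace ℝ (Fin n)} {l : ℝ}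
    (hl : z + l • v ∈ K) : lam K v z ≤ l :=
  csInf_le (lam_bddBelow hcone hpointed hball hε hε2 hvnorm z) hl

/-- Bundled hypotheses on the cone. -/
structure ConeData (K : Set (EuclideanSpace ℝ (Fin n)))
    (v : EuclideanSpace ℝ (Fin n)) (ε : ℝ) : Prop where
  closed : IsClosed K
  conv : Convex ℝ K
  cone : ∀ c : ℝ, 0 ≤ c → ∀ x ∈ K, c • x ∈ K
  pointed : ∀ x ∈ K, -x ∈ K → x = 0
  ball : Metric.closedBall v ε ⊆ K
  εpos : 0 < ε
  εle : ε ≤ 1/2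
  vnorm : ‖v‖ = 1

variable {K : Set (EuclideanSpace ℝ (Fin n))} {v : EuclideanSpace ℝ (Fin n)} {ε : ℝ}

theorem ConeData.vmem (h : ConeData K v ε) : v ∈ K :=
  h.ball (Metric.mem_closedBall_self h.εpos.le)

theorem ConeData.vne (h : ConeData K v ε) : v ≠ 0 := by
  intro hv
  have := h.vnorm
  rw [hv, norm_zero] at this
  norm_num at this

theorem ConeData.lam_mem' (h : ConeData K v ε) (z : EuclideanSpace ℝ (Fin n)) :
    z + (lam K v z) • v ∈ K :=
  lam_mem h.closed h.conv h.cone h.pointed h.ball h.εpos h.εle h.vnorm z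

theorem ConeData.lam_le' (h : ConeData K v ε) {z : EuclideanSpace ℝ (Fin n)} {l : ℝ}
    (hl : z + l • v ∈ K) : lam K v z ≤ l :=
  lam_le h.cone h.pointed h.ball h.εpos h.εle h.vnorm hl

theorem ConeData.add (h : ConeData K v ε) {x y : EuclideanSpace ℝ (Fin n)}
    (hx : x ∈ K) (hy : y ∈ K) : x + y ∈ K := kadd h.conv h.cone hx hy

theorem ConeData.lam_le_norm (h : ConeData K v ε) (z : EuclideanSpace ℝ (Fin n)) :
    lam K v z ≤ ‖z‖ / ε :=
  h.lam_le' (norm_div_mem h.cone h.ball h.εpos z)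

theorem ConeData.neg_norm_le_lam (h : ConeData K v ε) (z : EuclideanSpace ℝ (Fin n)) :
    -(‖z‖ / ε) ≤ lam K v z :=
  le_of_mem_lamSet h.cone h.pointed h.ball h.εpos h.εle h.vnorm (h.lam_mem' z)

theorem ConeData.lam_add_le (h : ConeData K v ε) (z w : EuclideanSpace ℝ (Fin n)) :
    lam K v (z + w) ≤ lam K v z + lam K v w := by
  apply h.lam_le'
  have := h.add (h.lam_mem' z) (h.lam_mem' w)
  have heq : z + lam K v z • v + (w + lam K v w • v)
      = z + w + (lam K v z + lam K v w) • v := by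
    rw [add_smul]; abel
  rwa [heq] at this

theorem ConeData.lam_shift (h : ConeData K v ε) (z : EuclideanSpace ℝ (Fin n)) (c : ℝ) :
    lam K v (z + c • v) = lam K v z - c := by
  have le1 : lam K v (z + c • v) ≤ lam K v z - c := by
    apply h.lam_le'
    have := h.lam_mem' z
    have heq : z + c • v + (lam K v z - c) • v = z + lam K v z • v := by
      rw [sub_smul]; abel
    rwa [heq]
  have le2 : lam K v z ≤ lam K v (z + c • v) + c := by
    apply h.lam_le'
    have := h.lam_mem' (z + c • v)
    have heq : z + c • v + lam K v (z + c • v) • v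
        = z + (lam K v (z + c • v) + c) • v := by
      rw [add_smul]; abel
    rwa [heq] at this
  linarith

theorem ConeData.lam_lipschitz (h : ConeData K v ε) (z w : EuclideanSpace ℝ (Fin n)) :
    |lam K v z - lam K v w| ≤ ‖z - w‖ / ε := by
  rw [abs_le]
  constructor
  · have h1 : lam K v w ≤ lam K v z + lam K v (w - z) := by
      have := h.lam_add_le z (w - z)
      have heq : z + (w - z) = w := by abel
      rwa [heq] at this
    have h2 : lam K v (w - z) ≤ ‖w - z‖ / ε := h.lam_le_norm _
    rw [← norm_neg, neg_sub] at h2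
    linarith
  · have h1 : lam K v z ≤ lam K v w + lam K v (z - w) := by
      have := h.lam_add_le w (z - w)
      have heq : w + (z - w) = z := by abel
      rwa [heq] at this
    have h2 : lam K v (z - w) ≤ ‖z - w‖ / ε := h.lam_le_norm _
    linarith

/-- The "width" function `g`. -/
noncomputable def gfun (K : Set (EuclideanSpace ℝ (Fin n)))
    (v z : EuclideanSpace ℝ (Fin n)) : ℝ :=
  lam K v z + lam K v (-z)

theorem ConeData.gfun_nonneg (h : ConeData K v ε) (z : EuclideanSpace ℝ (Fin n)) :
    0 ≤ gfun K v z := by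
  by_contra hneg
  push_neg at hneg
  set s := gfun K v z with hs
  have hsv : s • v ∈ K := by
    have := h.add (h.lam_mem' z) (h.lam_mem' (-z))
    have heq : z + lam K v z • v + (-z + lam K v (-z) • v) = s • v := by
      rw [hs, gfun, add_smul]; abel
    rwa [heq] at this
  have hnsv : (-s) • v ∈ K := h.cone (-s) (by linarith) v h.vmem
  have : s • v = 0 := h.pointed _ hsv (by rwa [← neg_smul])
  rcases smul_eq_zero.mp this with h1 | h2
  · rw [h1] at hneg; exact lt_irrefl 0 hneg
  · exact h.vne h2

theorem ConeData.gfun_eq_zero (h : ConeData K v ε) {z : EuclideanSpace ℝ (Fin n)}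
    (hz : gfun K v z = 0) : z = (-(lam K v z)) • v := by
  have hb : lam K v (-z) = -(lam K v z) := by
    have := hz; rw [gfun] at this; linarith
  have h1 := h.lam_mem' z
  have h2 := h.lam_mem' (-z)
  rw [hb] at h2
  have h2' : -(z + lam K v z • v) ∈ K := by
    have heq : -z + (-(lam K v z)) • v = -(z + lam K v z • v) := by
      rw [neg_smul]; abel
    rwa [heq] at h2
  have h0 : z + lam K v z • v = 0 := h.pointed _ h1 h2'
  rw [neg_smul, eq_neg_iff_add_eq_zero]
  exact h0

theorem ConeData.gfun_shift (h : ConeData K v ε) (z : EuclideanSpace ℝ (Fin n)) (c : ℝ) :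
    gfun K v (z + c • v) = gfun K v z := by
  rw [gfun, gfun, h.lam_shift z c]
  have heq : -(z + c • v) = -z + (-c) • v := by rw [neg_smul]; abel
  rw [heq, h.lam_shift (-z) (-c)]
  ring

theorem ConeData.gfun_lipschitz (h : ConeData K v ε) (z w : EuclideanSpace ℝ (Fin n)) :
    |gfun K v z - gfun K v w| ≤ 2 * (‖z - w‖ / ε) := by
  have h1 := h.lam_lipschitz z w
  have h2 := h.lam_lipschitz (-z) (-w)
  rw [show -z - -w = -(z - w) by abel, norm_neg] at h2
  rw [gfun, gfun]
  have := abs_add_le (lam K v z - lam K v w) (lam K v (-z) - lam K v (-w))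
  calc |lam K v z + lam K v (-z) - (lam K v w + lam K v (-w))|
      = |(lam K v z - lam K v w) + (lam K v (-z) - lam K v (-w))| := by ring_nf
  _ ≤ |lam K v z - lam K v w| + |lam K v (-z) - lam K v (-w)| := abs_add_le _ _
  _ ≤ 2 * (‖z - w‖ / ε) := by linarith

theorem ConeData.gfun_le (h : ConeData K v ε) (z : EuclideanSpace ℝ (Fin n)) :
    gfun K v z ≤ 2 * (‖z‖ / ε) := by
  have h1 := h.lam_le_norm z
  have h2 := h.lam_le_norm (-z)
  rw [norm_neg] at h2
  rw [gfun]; linarith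

/-- Positive multiples of `v` lie in the interior of `K`. -/
theorem ConeData.smul_v_mem_interior (h : ConeData K v ε) {c : ℝ} (hc : 0 < c) :
    c • v ∈ interior K := by
  rw [mem_interior]
  refine ⟨Metric.ball (c • v) (c * ε), ?_, Metric.isOpen_ball,
    Metric.mem_ball_self (mul_pos hc h.εpos)⟩
  intro w hw
  have hmem : c⁻¹ • w ∈ Metric.closedBall v ε := by
    rw [Metric.mem_closedBall, dist_eq_norm]
    have : c⁻¹ • w - v = c⁻¹ • (w - c • v) := by
      rw [smul_sub, smul_smul, inv_mul_cancel₀ hc.ne', one_smul]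
    rw [this, norm_smul, Real.norm_eq_abs, abs_of_pos (inv_pos.mpr hc)]
    rw [Metric.mem_ball, dist_eq_norm] at hw
    rw [inv_mul_le_iff₀ hc]
    calc ‖w - c • v‖ ≤ c * ε := hw.le
    _ = c * ε := rfl
  have := h.cone c hc.le _ (h.ball hmem)
  rwa [smul_smul, mul_inv_cancel₀ hc.ne', one_smul] at this

theorem ConeData.lam_zero (h : ConeData K v ε) : lam K v (0 : EuclideanSpace ℝ (Fin n)) = 0 := by
  have h1 : lam K v (0 : EuclideanSpace ℝ (Fin n)) ≤ 0 := by
    apply h.lam_le'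
    have : (0 : EuclideanSpace ℝ (Fin n)) + (0:ℝ) • v = 0 := by simp
    rw [this]
    simpa using h.cone 0 le_rfl v h.vmem
  have h2 := h.gfun_nonneg (0 : EuclideanSpace ℝ (Fin n))
  rw [gfun, neg_zero] at h2
  linarith

theorem ConeData.gfun_zero (h : ConeData K v ε) : gfun K v (0 : EuclideanSpace ℝ (Fin n)) = 0 := by
  rw [gfun, neg_zero, h.lam_zero]; ring

theorem ConeData.gfun_smul_v (h : ConeData K v ε) (c : ℝ) : gfun K v (c • v) = 0 := by
  have := h.gfun_shift 0 c
  rw [zero_add, h.gfun_zero] at this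
  exact this

theorem ConeData.gfun_pos (h : ConeData K v ε) {z : EuclideanSpace ℝ (Fin n)}
    (hz : z ≠ 0) (hzv : (inner ℝ v z : ℝ) = 0) : 0 < gfun K v z := by
  rcases (h.gfun_nonneg z).lt_or_eq with hlt | heq
  · exact hlt
  · exfalso
    have := h.gfun_eq_zero heq.symm
    apply hz
    rw [this] at hzv ⊢
    rw [real_inner_smul_right, real_inner_self_eq_norm_mul_norm, h.vnorm] at hzv
    simp only [mul_one, one_mul] at hzv
    rw [hzv, zero_smul]

/-- From a point in the interior one can subtract a small multiple of `v`. -/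
theorem int_sub_v {z : EuclideanSpace ℝ (Fin n)} (hvnorm : ‖v‖ = 1)
    (hz : z ∈ interior K) : ∃ δ : ℝ, 0 < δ ∧ z - δ • v ∈ K := by
  rw [mem_interior_iff_mem_nhds, Metric.mem_nhds_iff] at hz
  obtain ⟨ρ, hρ, hsub⟩ := hz
  refine ⟨ρ/2, by linarith, ?_⟩
  apply hsub
  rw [Metric.mem_ball, dist_eq_norm]
  have : z - (ρ/2) • v - z = -((ρ/2) • v) := by abel
  rw [this, norm_neg, norm_smul, Real.norm_eq_abs, abs_of_pos (by linarith : (0:ℝ) < ρ/2),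
    hvnorm, mul_one]
  linarith

end Cone

section PiProj

variable {v : EuclideanSpace ℝ (Fin n)}

theorem piProj_def (v x : EuclideanSpace ℝ (Fin n)) :
    piProj v x = x + (-(inner ℝ v x : ℝ)) • v := by
  rw [piProj, neg_smul, sub_eq_add_neg]

theorem piProj_add_smul (hvnorm : ‖v‖ = 1) (x : EuclideanSpace ℝ (Fin n)) (c : ℝ) :
    piProj v (x + c • v) = piProj v x := by
  rw [piProj, piProj, inner_add_right, real_inner_smul_right,
    real_inner_self_eq_norm_mul_norm, hvnorm]
  simp only [mul_one, one_mul, add_smul]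
  abel

theorem inner_piProj (hvnorm : ‖v‖ = 1) (x : EuclideanSpace ℝ (Fin n)) :
    (inner ℝ v (piProj v x) : ℝ) = 0 := by
  rw [piProj, inner_sub_right, real_inner_smul_right,
    real_inner_self_eq_norm_mul_norm, hvnorm]
  ring

theorem eq_piProj_add (v x : EuclideanSpace ℝ (Fin n)) :
    x = piProj v x + (inner ℝ v x : ℝ) • v := by
  rw [piProj]; abel

theorem piProj_continuous (v : EuclideanSpace ℝ (Fin n)) :
    Continuous (piProj v) := by
  apply Continuous.sub continuous_id
  exact (Continuous.inner (𝕜 := ℝ) continuous_const continuous_id).smul continuous_const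

end PiProj

section ODE

variable {X : Set (EuclideanSpace ℝ (Fin n))}
variable {f : EuclideanSpace ℝ (Fin n) → EuclideanSpace ℝ (Fin n)}

/-- Uniqueness of solutions of `ẋ = f x` on `[0, ∞)` for a locally Lipschitz `f`. -/
theorem ode_uniq
    (hf : ∀ x ∈ X, ∃ L : NNReal, ∃ U ∈ nhdsWithin x X, LipschitzOnWith L f U)
    {u w : ℝ → EuclideanSpace ℝ (Fin n)}
    (humem : ∀ t, 0 ≤ t → u t ∈ X) (hwmem : ∀ t, 0 ≤ t → w t ∈ X)
    (hud : ∀ t, 0 ≤ t → HasDerivWithinAt u (f (u t)) (Ici 0) t)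
    (hwd : ∀ t, 0 ≤ t → HasDerivWithinAt w (f (w t)) (Ici 0) t)
    (h0 : u 0 = w 0) : ∀ t, 0 ≤ t → u t = w t := by
  intro T hT
  have hucont : ContinuousOn u (Ici 0) := fun t ht => (hud t ht).continuousWithinAt
  have hwcont : ContinuousOn w (Ici 0) := fun t ht => (hwd t ht).continuousWithinAt
  set s : Set ℝ := {t | u t = w t} with hs
  have key : Icc (0:ℝ) T ⊆ s := by
    apply IsClosed.Icc_subset_of_forall_exists_gt
    · -- closedness
      have : s ∩ Icc (0:ℝ) T = Icc (0:ℝ) T ∩ (fun t => u t - w t) ⁻¹' {0} := by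
        ext t
        simp only [hs, mem_inter_iff, mem_setOf_eq, mem_preimage, mem_singleton_iff,
          sub_eq_zero]
        tauto
      rw [this]
      exact ContinuousOn.preimage_isClosed_of_isClosed
        ((hucont.sub hwcont).mono (Icc_subset_Ici_self))
        isClosed_Icc isClosed_singleton
    · exact h0
    · rintro x ⟨hxs, hx0, hxT⟩ y hy
      obtain ⟨L, U, hU, hLip⟩ := hf (u x) (humem x hx0)
      rw [mem_nhdsWithin] at hU
      obtain ⟨O, hOopen, hxO, hOU⟩ := hU
      have hev : {t | u t ∈ O ∧ w t ∈ O} ∈ 𝓝[Ici 0] x := by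
        apply Filter.Eventually.and
        · exact (hucont x (mem_Ici.mpr hx0)).eventually_mem (hOopen.mem_nhds hxO)
        · refine (hwcont x (mem_Ici.mpr hx0)).eventually_mem (hOopen.mem_nhds ?_)
          rwa [← hxs]
      rw [Metric.mem_nhdsWithin_iff] at hev
      obtain ⟨η, hη, hball⟩ := hev
      set b := x + η/2 with hb
      have hxb : x < b := by rw [hb]; linarith
      have hIccO : ∀ t ∈ Icc x b, u t ∈ O ∧ w t ∈ O := by
        intro t ht
        apply hball
        constructor
        · rw [Metric.mem_ball, Real.dist_eq, abs_lt]
          have h2 : t ≤ x + η/2 := ht.2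
          constructor <;> [linarith [ht.1]; linarith]
        · exact mem_Ici.mpr (le_trans hx0 ht.1)
      have heqon : EqOn u w (Icc x b) := by
        apply ODE_solution_unique_of_mem_Icc_right
          (v := fun _ z => f z) (s := fun _ => U) (K := L)
        · intro _ _; exact hLip
        · exact hucont.mono (Icc_subset_Ici_self.trans (Ici_subset_Ici.mpr hx0))
        · intro t ht
          exact (hud t (le_trans hx0 ht.1)).mono (Ici_subset_Ici.mpr (le_trans hx0 ht.1))
        · intro t ht
          exact hOU ⟨(hIccO t ⟨ht.1, ht.2.le⟩).1, humem t (le_trans hx0 ht.1)⟩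
        · exact hwcont.mono (Icc_subset_Ici_self.trans (Ici_subset_Ici.mpr hx0))
        · intro t ht
          exact (hwd t (le_trans hx0 ht.1)).mono (Ici_subset_Ici.mpr (le_trans hx0 ht.1))
        · intro t ht
          exact hOU ⟨(hIccO t ⟨ht.1, ht.2.le⟩).2, hwmem t (le_trans hx0 ht.1)⟩
        · exact hxs
      refine ⟨min y b, ?_, lt_min hy hxb, min_le_left _ _⟩
      exact heqon ⟨(lt_min hy hxb).le, min_le_right _ _⟩
  exact key ⟨hT, le_rfl⟩

theorem lipschitzOnWith_weaken {α β : Type*} [PseudoEMetricSpace α] [PseudoEMetricSpace β]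
    {K K' : NNReal} {f : α → β} {s : Set α}
    (h : LipschitzOnWith K f s) (hK : K ≤ K') : LipschitzOnWith K' f s :=
  fun x hx y hy => le_trans (h hx hy) (mul_le_mul_left (ENNReal.coe_le_coe.mpr hK) _)

/-- Continuous dependence of the flow on the initial condition. -/
theorem flow_cont
    (hf : ∀ x ∈ X, ∃ L : NNReal, ∃ U ∈ nhdsWithin x X, LipschitzOnWith L f U)
    {φ : ℝ → EuclideanSpace ℝ (Fin n) → EuclideanSpace ℝ (Fin n)}
    (hφ0 : ∀ ξ ∈ X, φ 0 ξ = ξ)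
    (hφX : ∀ ξ ∈ X, ∀ t : ℝ, 0 ≤ t → φ t ξ ∈ X)
    (hφode : ∀ ξ ∈ X, ∀ t : ℝ, 0 ≤ t →
      HasDerivWithinAt (fun s => φ s ξ) (f (φ t ξ)) (Set.Ici 0) t)
    {p : EuclideanSpace ℝ (Fin n)} (hp : p ∈ X) {τ : ℝ} (hτ : 0 ≤ τ)
    {ε' : ℝ} (hε' : 0 < ε') :
    ∃ δ : ℝ, 0 < δ ∧ ∀ x ∈ X, dist x p < δ → dist (φ τ x) (φ τ p) < ε' := by
  have contp : ContinuousOn (fun t => φ t p) (Ici 0) :=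
    fun t ht => (hφode p hp t ht).continuousWithinAt
  set Γ : Set (EuclideanSpace ℝ (Fin n)) := (fun t => φ t p) '' Icc 0 τ with hΓ
  have hΓcomp : IsCompact Γ :=
    isCompact_Icc.image_of_continuousOn (contp.mono Icc_subset_Ici_self)
  have hΓX : ∀ y ∈ Γ, y ∈ X := by
    rintro y ⟨t, ht, rfl⟩
    exact hφX p hp t ht.1
  -- local Lipschitz data around each point of the compact trajectory
  have hyp : ∀ y : Γ, ∃ r : ℝ, ∃ L : NNReal, 0 < r ∧
      LipschitzOnWith L f (Metric.ball (y : EuclideanSpace ℝ (Fin n)) (2*r) ∩ X) := by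
    rintro ⟨y, hy⟩
    obtain ⟨L, U, hU, hLip⟩ := hf y (hΓX y hy)
    rw [mem_nhdsWithin] at hU
    obtain ⟨O, hOopen, hyO, hOU⟩ := hU
    obtain ⟨ρ, hρ, hball⟩ := Metric.isOpen_iff.mp hOopen y hyO
    refine ⟨ρ/2, L, by linarith, ?_⟩
    apply hLip.mono
    intro w hw
    apply hOU
    refine ⟨hball ?_, hw.2⟩
    have : (2:ℝ) * (ρ/2) = ρ := by ring
    rw [← this]
    exact hw.1
  choose r L hr hLip using hyp
  -- a finite subcover
  obtain ⟨tf, htf⟩ := hΓcomp.elim_nhds_subcover'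
    (fun y hy => Metric.ball y (r ⟨y, hy⟩))
    (fun y hy => Metric.ball_mem_nhds _ (hr ⟨y, hy⟩))
  have hΓne : (φ 0 p) ∈ Γ := ⟨0, ⟨le_rfl, hτ⟩, rfl⟩
  have htfne : tf.Nonempty := by
    rcases mem_iUnion₂.mp (htf hΓne) with ⟨i, hi, _⟩
    exact ⟨i, hi⟩
  set rmin : ℝ := tf.inf' htfne (fun i => r i) with hrmin
  set Lmax : NNReal := tf.sup (fun i => L i) with hLmax
  have hrminpos : 0 < rmin := by
    rw [hrmin, Finset.lt_inf'_iff]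
    exact fun i _ => hr i
  -- uniform local Lipschitz estimate along the trajectory
  have key2 : ∀ z ∈ Γ, LipschitzOnWith Lmax f (Metric.closedBall z rmin ∩ X) := by
    intro z hz
    rcases mem_iUnion₂.mp (htf hz) with ⟨i, hi, hzi⟩
    have hsub : Metric.closedBall z rmin ∩ X ⊆
        Metric.ball (i : EuclideanSpace ℝ (Fin n)) (2 * r i) ∩ X := by
      rintro w ⟨hw1, hw2⟩
      refine ⟨?_, hw2⟩
      rw [Metric.mem_ball]
      have h1 : dist w z ≤ rmin := hw1
      have h2 : dist z i < r i := hzi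
      have h3 : rmin ≤ r i := Finset.inf'_le _ hi
      calc dist w i ≤ dist w z + dist z i := dist_triangle _ _ _
      _ < rmin + r i := by linarith
      _ ≤ 2 * r i := by linarith
    exact lipschitzOnWith_weaken ((hLip i).mono hsub) (Finset.le_sup hi)
  -- the bound
  set m : ℝ := min rmin ε' with hm
  have hmpos : 0 < m := lt_min hrminpos hε'
  set δ : ℝ := m * Real.exp (-(Lmax * τ)) / 2 with hδ
  have hδpos : 0 < δ := by
    apply div_pos (mul_pos hmpos (Real.exp_pos _)) two_pos
  refine ⟨δ, hδpos, ?_⟩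
  intro x hx hdist
  set D : ℝ → ℝ := fun t => dist (φ t x) (φ t p) with hD
  have contx : ContinuousOn (fun t => φ t x) (Ici 0) :=
    fun t ht => (hφode x hx t ht).continuousWithinAt
  have hDcont : ContinuousOn D (Ici 0) := fun t ht => (contx t ht).dist (contp t ht)
  have hbound : ∀ t ∈ Icc (0:ℝ) τ, D t ≤ δ * Real.exp (Lmax * t) := by
    have hsub : Icc (0:ℝ) τ ⊆ {t | D t ≤ δ * Real.exp (Lmax * t)} := by
      apply IsClosed.Icc_subset_of_forall_exists_gt
      · -- closedness
        have heq : {t | D t ≤ δ * Real.exp (Lmax * t)} ∩ Icc (0:ℝ) τ =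
            Icc (0:ℝ) τ ∩ (fun t => D t - δ * Real.exp (Lmax * t)) ⁻¹' (Iic 0) := by
          ext t
          simp only [mem_inter_iff, mem_setOf_eq, mem_preimage, mem_Iic, sub_nonpos]
          tauto
        rw [heq]
        apply ContinuousOn.preimage_isClosed_of_isClosed _ isClosed_Icc isClosed_Iic
        apply ContinuousOn.sub (hDcont.mono Icc_subset_Ici_self)
        exact (continuous_const.mul (Real.continuous_exp.comp
          (continuous_const.mul continuous_id))).continuousOn
      · -- zero
        show D 0 ≤ δ * Real.exp (Lmax * 0)
        rw [hD]
        simp only [hφ0 x hx, hφ0 p hp, mul_zero, Real.exp_zero, mul_one]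
        exact hdist.le
      · -- the induction step
        rintro a ⟨haB, ha0, haτ⟩ y hy
        have hDa : D a ≤ m/2 := by
          have h1 : D a ≤ δ * Real.exp (Lmax * a) := haB
          have h2 : Real.exp ((Lmax:ℝ) * a) ≤ Real.exp (Lmax * τ) := by
            apply Real.exp_le_exp.mpr
            exact mul_le_mul_of_nonneg_left haτ.le Lmax.coe_nonneg
          calc D a ≤ δ * Real.exp (Lmax * τ) := by
                refine h1.trans (mul_le_mul_of_nonneg_left h2 hδpos.le)
          _ = m/2 * (Real.exp (-(Lmax * τ)) * Real.exp (Lmax * τ)) := by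
                rw [hδ]; ring
          _ = m/2 := by rw [← Real.exp_add]; simp
        -- continuity gives a small interval where D stays below rmin
        have hev : ∀ᶠ t in 𝓝[Ici 0] a, D t ∈ Iio rmin := by
          apply (hDcont a (mem_Ici.mpr ha0)).eventually_mem
          apply Iio_mem_nhds
          calc D a ≤ m/2 := hDa
          _ < m := by linarith
          _ ≤ rmin := min_le_left _ _
        rw [Filter.eventually_iff, Metric.mem_nhdsWithin_iff] at hev
        obtain ⟨η, hη, hball⟩ := hev
        set b : ℝ := min (a + η/2) τ with hb
        have hab : a < b := lt_min (by linarith) haτ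
        have hbτ : b ≤ τ := min_le_right _ _
        have hIccrmin : ∀ t ∈ Icc a b, D t ≤ rmin := by
          intro t ht
          have h1 : t ≤ a + η/2 := le_trans ht.2 (min_le_left _ _)
          have : t ∈ Metric.ball a η ∩ Ici 0 := by
            constructor
            · rw [Metric.mem_ball, Real.dist_eq, abs_lt]
              constructor <;> [linarith [ht.1]; linarith]
            · exact mem_Ici.mpr (le_trans ha0 ht.1)
          exact (hball this).le
        -- Gronwall on [a, b]
        have hv' : ∀ t : ℝ, LipschitzOnWith Lmax (fun z => f z)
            (Metric.closedBall (φ (max 0 (min t τ)) p) rmin ∩ X) := by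
          intro t
          apply key2
          exact ⟨max 0 (min t τ), ⟨le_max_left _ _, max_le hτ (min_le_right _ _)⟩, rfl⟩
        have hf1 : ContinuousOn (fun t => φ t x) (Icc a b) :=
          contx.mono (Icc_subset_Ici_self.trans (Ici_subset_Ici.mpr ha0))
        have hg1 : ContinuousOn (fun t => φ t p) (Icc a b) :=
          contp.mono (Icc_subset_Ici_self.trans (Ici_subset_Ici.mpr ha0))
        have hf1' : ∀ t ∈ Ico a b, HasDerivWithinAt (fun s => φ s x) (f (φ t x)) (Ici t) t :=
          fun t ht' => (hφode x hx t (le_trans ha0 ht'.1)).mono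
            (Ici_subset_Ici.mpr (le_trans ha0 ht'.1))
        have hg1' : ∀ t ∈ Ico a b, HasDerivWithinAt (fun s => φ s p) (f (φ t p)) (Ici t) t :=
          fun t ht' => (hφode p hp t (le_trans ha0 ht'.1)).mono
            (Ici_subset_Ici.mpr (le_trans ha0 ht'.1))
        have hproj : ∀ t ∈ Ico a b, max 0 (min t τ) = t := by
          intro t ht'
          rw [min_eq_left (le_trans ht'.2.le hbτ), max_eq_right (le_trans ha0 ht'.1)]
        have hfs1 : ∀ t ∈ Ico a b,
            φ t x ∈ Metric.closedBall (φ (max 0 (min t τ)) p) rmin ∩ X := by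
          intro t ht'
          rw [hproj t ht']
          exact ⟨Metric.mem_closedBall.mpr (hIccrmin t ⟨ht'.1, ht'.2.le⟩),
            hφX x hx t (le_trans ha0 ht'.1)⟩
        have hgs1 : ∀ t ∈ Ico a b,
            φ t p ∈ Metric.closedBall (φ (max 0 (min t τ)) p) rmin ∩ X := by
          intro t ht'
          rw [hproj t ht']
          exact ⟨Metric.mem_closedBall_self hrminpos.le, hφX p hp t (le_trans ha0 ht'.1)⟩
        have ha1 : dist (φ a x) (φ a p) ≤ δ * Real.exp (Lmax * a) := haB
        have hgron : ∀ t ∈ Icc a b, D t ≤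
            (δ * Real.exp (Lmax * a)) * Real.exp (Lmax * (t - a)) :=
          dist_le_of_trajectories_ODE_of_mem
            (v := fun _ z => f z)
            (s := fun t => Metric.closedBall (φ (max 0 (min t τ)) p) rmin ∩ X)
            (K := Lmax) (fun t _ => hv' t) hf1 hf1' hfs1 hg1 hg1' hgs1 ha1
        refine ⟨min y b, ?_, lt_min hy hab, min_le_left _ _⟩
        show D (min y b) ≤ δ * Real.exp (Lmax * (min y b))
        have h1 := hgron (min y b) ⟨(lt_min hy hab).le, min_le_right _ _⟩
        calc D (min y b) ≤ (δ * Real.exp (Lmax * a)) * Real.exp (Lmax * (min y b - a)) := h1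
        _ = δ * Real.exp (Lmax * (min y b)) := by
              rw [mul_assoc, ← Real.exp_add]
              ring_nf
    intro t ht
    exact hsub ht
  have hfinal := hbound τ ⟨hτ, le_rfl⟩
  calc dist (φ τ x) (φ τ p) = D τ := rfl
  _ ≤ δ * Real.exp (Lmax * τ) := hfinal
  _ = m/2 * (Real.exp (-(Lmax * τ)) * Real.exp (Lmax * τ)) := by rw [hδ]; ring
  _ = m/2 := by rw [← Real.exp_add]; simp
  _ ≤ ε'/2 := by have := min_le_right rmin ε'; rw [hm] at *; linarith
  _ < ε' := by linarith

end ODE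

end Stmt1Aux

set_option maxHeartbeats 2000000 in
open Stmt1Aux in
/-- a forward complete system `ẋ = f(x)` on `X` which is strongly monotone
in reversed time and translation invariant along the unit vector `v ∈ interior K`, with
`X` closed and invariant under translations by `v`, is such that every solution bounded
modulo `v` has `π_v(φ_t(ξ))` converging to an equilibrium `p ∈ X ∩ v^⊥` of the projected
system (`f(p) ∈ span{v}`); moreover this equilibrium is unique. -/
theorem stmt1 {n : ℕ} (K X : Set (EuclideanSpace ℝ (Fin n)))
    (f : EuclideanSpace ℝ (Fin n) → EuclideanSpace ℝ (Fin n))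
    (φ : ℝ → EuclideanSpace ℝ (Fin n) → EuclideanSpace ℝ (Fin n))
    (v : EuclideanSpace ℝ (Fin n))
    -- K is a closed pointed convex cone with nonempty interior
    (hKclosed : IsClosed K) (hKconv : Convex ℝ K)
    (hKcone : ∀ c : ℝ, 0 ≤ c → ∀ x ∈ K, c • x ∈ K)
    (hKpointed : ∀ x ∈ K, -x ∈ K → x = 0)
    (hv : v ∈ interior K) (hvnorm : ‖v‖ = 1)
    -- X is closed, the closure of its interior, and invariant under translations by v
    (hXclosed : IsClosed X) (hXreg : X = closure (interior X))
    (hXtrans : ∀ x ∈ X, ∀ lam : ℝ, x + lam • v ∈ X)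
    -- f is locally Lipschitz on X
    (hf : ∀ x ∈ X, ∃ L : NNReal, ∃ U ∈ nhdsWithin x X, LipschitzOnWith L f U)
    -- φ is the forward complete flow of ẋ = f(x) on X
    (hφ0 : ∀ ξ ∈ X, φ 0 ξ = ξ)
    (hφX : ∀ ξ ∈ X, ∀ t : ℝ, 0 ≤ t → φ t ξ ∈ X)
    (hφode : ∀ ξ ∈ X, ∀ t : ℝ, 0 ≤ t →
      HasDerivWithinAt (fun s => φ s ξ) (f (φ t ξ)) (Set.Ici 0) t)
    -- strong monotonicity in reversed time:
    -- for t > 0, φ_t(ξ₁) ≻ φ_t(ξ₂) implies ξ₁ ≫ ξ₂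
    (hmono : ∀ ξ₁ ∈ X, ∀ ξ₂ ∈ X, ∀ t : ℝ, 0 < t →
      φ t ξ₁ - φ t ξ₂ ∈ K → φ t ξ₁ ≠ φ t ξ₂ → ξ₁ - ξ₂ ∈ interior K)
    -- translation invariance along v
    (htrans : ∀ ξ ∈ X, ∀ lam t : ℝ, 0 ≤ t → φ t (ξ + lam • v) = φ t ξ + lam • v) :
    -- every solution bounded modulo v has π_v(φ_t(ξ)) converging to an equilibrium
    (∀ ξ ∈ X, (∃ M : ℝ, ∀ t : ℝ, 0 ≤ t → ‖piProj v (φ t ξ)‖ ≤ M) →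
      ∃ p : EuclideanSpace ℝ (Fin n), p ∈ X ∧ (inner ℝ v p : ℝ) = 0 ∧
        (∃ r : ℝ, f p = r • v) ∧
        Tendsto (fun t => piProj v (φ t ξ)) atTop (𝓝 p)) ∧
    -- moreover, the equilibrium of the projected system is unique
    (∀ p₁ p₂ : EuclideanSpace ℝ (Fin n),
      p₁ ∈ X → (inner ℝ v p₁ : ℝ) = 0 → (∃ r : ℝ, f p₁ = r • v) →
      p₂ ∈ X → (inner ℝ v p₂ : ℝ) = 0 → (∃ r : ℝ, f p₂ = r • v) → p₁ = p₂) := by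
  classical
  -- a closed ball around `v` contained in `K`
  obtain ⟨ε₀, hε₀, hball₀⟩ := Metric.isOpen_iff.mp isOpen_interior v hv
  set ε : ℝ := min (ε₀/2) (1/2) with hε
  have hεpos : 0 < ε := lt_min (by linarith) (by norm_num)
  have hεle : ε ≤ 1/2 := min_le_right _ _
  have hball : Metric.closedBall v ε ⊆ K := by
    intro w hw
    apply interior_subset
    apply hball₀
    rw [Metric.mem_ball]
    calc dist w v ≤ ε := hw
    _ ≤ ε₀/2 := min_le_left _ _
    _ < ε₀ := by linarith
  have hcd : ConeData K v ε :=
    ⟨hKclosed, hKconv, hKcone, hKpointed, hball, hεpos, hεle, hvnorm⟩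
  -- semigroup property
  have hsemi : ∀ ξ ∈ X, ∀ s : ℝ, 0 ≤ s → ∀ t : ℝ, 0 ≤ t →
      φ (t + s) ξ = φ t (φ s ξ) := by
    intro ξ hξ s hs
    have hξs : φ s ξ ∈ X := hφX ξ hξ s hs
    have h1 : ∀ t, 0 ≤ t → φ (t+s) ξ ∈ X := fun t ht => hφX ξ hξ _ (by linarith)
    have h2 : ∀ t, 0 ≤ t → φ t (φ s ξ) ∈ X := fun t ht => hφX _ hξs t ht
    have hd1 : ∀ t, 0 ≤ t →
        HasDerivWithinAt (fun r => φ (r+s) ξ) (f (φ (t+s) ξ)) (Ici 0) t := by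
      intro t ht
      have base := hφode ξ hξ (t+s) (by linarith)
      have hshift : HasDerivWithinAt (fun r : ℝ => r + s) 1 (Ici 0) t :=
        ((hasDerivAt_id t).add_const s).hasDerivWithinAt
      have hmaps : MapsTo (fun r : ℝ => r + s) (Ici 0) (Ici 0) :=
        fun r hr => by simp only [mem_Ici] at *; linarith
      have := HasDerivWithinAt.scomp t base hshift hmaps
      rwa [one_smul] at this
    have hd2 : ∀ t, 0 ≤ t →
        HasDerivWithinAt (fun r => φ r (φ s ξ)) (f (φ t (φ s ξ))) (Ici 0) t :=
      fun t ht => hφode _ hξs t ht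
    have h0 : φ (0+s) ξ = φ 0 (φ s ξ) := by rw [zero_add, hφ0 _ hξs]
    exact fun t ht => ode_uniq hf h1 h2 hd1 hd2 h0 t ht
  -- `f` is invariant under translations by `v`
  have hfInv : ∀ x ∈ X, ∀ c : ℝ, f (x + c • v) = f x := by
    intro x hx c
    have hxc : x + c • v ∈ X := hXtrans x hx c
    have h1 : HasDerivWithinAt (fun t => φ t (x + c•v)) (f (x + c•v)) (Ici 0) 0 := by
      have := hφode _ hxc 0 le_rfl
      rwa [hφ0 _ hxc] at this
    have h2 : HasDerivWithinAt (fun t => φ t x + c•v) (f x) (Ici 0) 0 := by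
      have := hφode x hx 0 le_rfl
      rw [hφ0 x hx] at this
      exact this.add_const _
    have h2' : HasDerivWithinAt (fun t => φ t (x + c•v)) (f x) (Ici 0) 0 := by
      apply h2.congr
      · intro t ht
        exact htrans x hx c t ht
      · rw [htrans x hx c 0 le_rfl]
    have hud : UniqueDiffWithinAt ℝ (Ici (0:ℝ)) 0 := uniqueDiffOn_Ici 0 0 self_mem_Ici
    rw [← h1.derivWithin hud, ← h2'.derivWithin hud]
  -- equilibria rise along straight lines
  have heqline : ∀ p ∈ X, ∀ r : ℝ, f p = r • v → ∀ t, 0 ≤ t →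
      φ t p = p + (t*r) • v := by
    intro p hp r hr
    apply ode_uniq hf (fun t ht => hφX p hp t ht) (fun t _ => hXtrans p hp (t*r))
    · exact fun t ht => hφode p hp t ht
    · intro t ht
      have h1 : HasDerivWithinAt (fun t : ℝ => p + (t*r)•v) (r•v) (Ici 0) t := by
        apply HasDerivWithinAt.const_add
        have hmul : HasDerivWithinAt (fun t : ℝ => t*r) r (Ici 0) t :=
          ((hasDerivAt_id t).mul_const r).hasDerivWithinAt.congr_deriv (one_mul r)
        exact hmul.smul_const v
      have : f (p + (t*r)•v) = r • v := by rw [hfInv p hp (t*r), hr]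
      rw [this]
      exact h1
    · rw [hφ0 p hp]; simp
  -- the one-sided monotone step
  have hside : ∀ x ∈ X, ∀ y ∈ X, ∀ τ : ℝ, 0 < τ →
      lam K v (x - y) ≤ lam K v (φ τ x - φ τ y) ∧
      (lam K v (x - y) = lam K v (φ τ x - φ τ y) →
        φ τ y = φ τ x + (lam K v (φ τ x - φ τ y)) • v) := by
    intro x hx y hy τ hτ
    set l := lam K v (φ τ x - φ τ y) with hl
    by_cases hc : φ τ x + l • v = φ τ y
    · -- the two flows agree modulo `v` at time `τ`
      have hle : ∀ μ : ℝ, l < μ → lam K v (x - y) ≤ μ := by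
        intro μ hμ
        have hdiff : φ τ (x + μ • v) - φ τ y = (μ - l) • v := by
          rw [htrans x hx μ τ hτ.le, ← hc, sub_smul]
          abel
        have hKmem : φ τ (x + μ•v) - φ τ y ∈ K := by
          rw [hdiff]
          exact interior_subset (hcd.smul_v_mem_interior (by linarith))
        have hne : φ τ (x+μ•v) ≠ φ τ y := by
          intro h
          rw [h, sub_self] at hdiff
          have : μ - l = 0 ∨ v = 0 := smul_eq_zero.mp hdiff.symm
          rcases this with h' | h'
          · linarith
          · exact hcd.vne h'
        have hint := hmono _ (hXtrans x hx μ) y hy τ hτ hKmem hne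
        have hmem : x - y + μ • v ∈ K := by
          have : x + μ • v - y = x - y + μ • v := by abel
          rw [← this]
          exact interior_subset hint
        exact hcd.lam_le' hmem
      have h1 : lam K v (x-y) ≤ l := le_of_forall_gt_imp_ge_of_dense hle
      exact ⟨h1, fun _ => hc.symm⟩
    · -- strict increase
      have hKmem' : φ τ (x + l•v) - φ τ y ∈ K := by
        rw [htrans x hx l τ hτ.le]
        have : φ τ x + l • v - φ τ y = φ τ x - φ τ y + l • v := by abel
        rw [this]
        exact hcd.lam_mem' _
      have hne : φ τ (x + l•v) ≠ φ τ y := by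
        rw [htrans x hx l τ hτ.le]
        exact hc
      have hint := hmono _ (hXtrans x hx l) y hy τ hτ hKmem' hne
      have hint' : x - y + l•v ∈ interior K := by
        have : x + l • v - y = x - y + l • v := by abel
        rw [← this]
        exact hint
      obtain ⟨δ', hδ', hmem⟩ := int_sub_v hvnorm hint'
      have hmem' : x - y + (l - δ')•v ∈ K := by
        have : x - y + (l - δ') • v = x - y + l • v - δ' • v := by
          rw [sub_smul]; abel
        rw [this]
        exact hmem
      have hlt : lam K v (x-y) ≤ l - δ' := hcd.lam_le' hmem'
      constructor
      · linarith
      · intro heq; exfalso; linarith [heq]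
  -- the two-sided monotone step
  have hstep : ∀ x ∈ X, ∀ y ∈ X, ∀ τ : ℝ, 0 < τ →
      gfun K v (x - y) ≤ gfun K v (φ τ x - φ τ y) ∧
      (gfun K v (x - y) = gfun K v (φ τ x - φ τ y) → ∃ c : ℝ, y = x + c • v) := by
    intro x hx y hy τ hτ
    obtain ⟨h1le, h1eq⟩ := hside x hx y hy τ hτ
    obtain ⟨h2le, h2eq⟩ := hside y hy x hx τ hτ
    have e1 : -(x - y) = y - x := by abel
    have e2 : -(φ τ x - φ τ y) = φ τ y - φ τ x := by abel
    have hg1 : gfun K v (x - y) = lam K v (x-y) + lam K v (y-x) := by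
      rw [gfun, e1]
    have hg2 : gfun K v (φ τ x - φ τ y) =
        lam K v (φ τ x - φ τ y) + lam K v (φ τ y - φ τ x) := by
      rw [gfun, e2]
    constructor
    · rw [hg1, hg2]; linarith
    · intro heq
      set l1 := lam K v (φ τ x - φ τ y) with hl1
      set l0 := lam K v (x - y) with hl0
      have heq1 : l0 = l1 := by rw [hg1, hg2] at heq; linarith
      have hrel := h1eq heq1
      have hd : φ τ x - φ τ y = (-l1) • v := by
        rw [hrel, neg_smul]; abel
      have hzero : gfun K v (φ τ x - φ τ y) = 0 := by
        rw [hd]; exact hcd.gfun_smul_v _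
      have hzero0 : gfun K v (x - y) = 0 := by rw [heq, hzero]
      have h3 := hcd.gfun_eq_zero hzero0
      rw [← hl0] at h3
      have h5 : y - x = l0 • v := by
        rw [← neg_sub x y, h3, neg_smul, neg_neg]
      exact ⟨l0, by rw [← h5]; abel⟩
  -- the projection of any bounded-modulo-v trajectory is constant
  have hconst : ∀ ξ ∈ X, ∀ M : ℝ, (∀ t : ℝ, 0 ≤ t → ‖piProj v (φ t ξ)‖ ≤ M) →
      ∀ t, 0 ≤ t → ∀ s, 0 < s → piProj v (φ t ξ) = piProj v (φ (t+s) ξ) := by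
    intro ξ hξ M hM
    by_contra hcon
    push_neg at hcon
    obtain ⟨t₁, ht₁, s, hs, hne⟩ := hcon
    set ψ : ℝ → EuclideanSpace ℝ (Fin n) := fun t => piProj v (φ t ξ) with hψ
    have hψX : ∀ t, 0 ≤ t → ψ t ∈ X := by
      intro t ht
      show piProj v (φ t ξ) ∈ X
      rw [piProj_def]
      exact hXtrans _ (hφX ξ hξ t ht) _
    have hψv : ∀ t : ℝ, (inner ℝ v (ψ t) : ℝ) = 0 := fun t => inner_piProj hvnorm _
    have hgψ : ∀ a b : ℝ, gfun K v (φ a ξ - φ b ξ) = gfun K v (ψ a - ψ b) := by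
      intro a b
      have hdecomp : φ a ξ - φ b ξ = (ψ a - ψ b) +
          ((inner ℝ v (φ a ξ) : ℝ) - (inner ℝ v (φ b ξ) : ℝ)) • v := by
        show _ = (piProj v (φ a ξ) - piProj v (φ b ξ)) + _ • v
        rw [piProj, piProj, sub_smul]
        abel
      rw [hdecomp, hcd.gfun_shift]
    have hGmono : ∀ ta, 0 ≤ ta → ∀ tb, ta ≤ tb →
        gfun K v (ψ ta - ψ (ta+s)) ≤ gfun K v (ψ tb - ψ (tb+s)) := by
      intro ta h0a tb hab
      rcases eq_or_lt_of_le hab with rfl | hlt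
      · exact le_rfl
      · have hXa : φ ta ξ ∈ X := hφX ξ hξ ta h0a
        have hXas : φ (ta+s) ξ ∈ X := hφX ξ hξ _ (by linarith)
        have h1 := (hstep _ hXa _ hXas (tb - ta) (by linarith)).1
        have e1 : φ (tb - ta) (φ ta ξ) = φ tb ξ := by
          rw [← hsemi ξ hξ ta h0a (tb-ta) (by linarith)]
          congr 1; ring
        have e2 : φ (tb - ta) (φ (ta+s) ξ) = φ (tb+s) ξ := by
          rw [← hsemi ξ hξ (ta+s) (by linarith) (tb-ta) (by linarith)]
          congr 1; ring
        rw [e1, e2] at h1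
        calc gfun K v (ψ ta - ψ (ta+s)) = gfun K v (φ ta ξ - φ (ta+s) ξ) := (hgψ _ _).symm
        _ ≤ gfun K v (φ tb ξ - φ (tb+s) ξ) := h1
        _ = gfun K v (ψ tb - ψ (tb+s)) := hgψ _ _
    set a : ℕ → ℝ := fun k => gfun K v (ψ k - ψ (k+s)) with ha
    have hamono : Monotone a := by
      intro i j hij
      exact hGmono i (Nat.cast_nonneg i) j (by exact_mod_cast hij)
    have habdd : BddAbove (range a) := by
      refine ⟨2 * ((2*M)/ε), ?_⟩
      rintro _ ⟨k, rfl⟩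
      have hnk : ‖ψ k - ψ ((k:ℝ)+s)‖ ≤ 2*M := by
        calc ‖ψ k - ψ ((k:ℝ)+s)‖ ≤ ‖ψ (k:ℝ)‖ + ‖ψ ((k:ℝ)+s)‖ := norm_sub_le _ _
        _ ≤ M + M := add_le_add (hM _ (Nat.cast_nonneg k))
            (hM _ (add_nonneg (Nat.cast_nonneg k) hs.le))
        _ = 2*M := by ring
      calc a k ≤ 2 * (‖ψ (k:ℝ) - ψ ((k:ℝ)+s)‖/ε) := hcd.gfun_le _
      _ ≤ 2 * ((2*M)/ε) := by gcongr
    set L := ⨆ k, a k with hL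
    have haL : Tendsto a atTop (𝓝 L) := tendsto_atTop_ciSup hamono habdd
    have hgpos : 0 < gfun K v (ψ t₁ - ψ (t₁+s)) := by
      apply hcd.gfun_pos
      · intro h0; apply hne; rwa [sub_eq_zero] at h0
      · rw [inner_sub_right, hψv, hψv]; ring
    have hLpos : 0 < L := by
      have hk₀ : t₁ ≤ (⌈t₁⌉₊ : ℝ) := Nat.le_ceil t₁
      have hmono1 := hGmono t₁ ht₁ _ hk₀
      have hLk : a ⌈t₁⌉₊ ≤ L := le_ciSup habdd _
      calc (0:ℝ) < gfun K v (ψ t₁ - ψ (t₁+s)) := hgpos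
      _ ≤ a ⌈t₁⌉₊ := hmono1
      _ ≤ L := hLk
    -- extract convergent subsequences
    have hbd : ∀ k : ℕ, ψ k ∈ Metric.closedBall (0 : EuclideanSpace ℝ (Fin n)) M := by
      intro k; rw [Metric.mem_closedBall, dist_zero_right]; exact hM _ (Nat.cast_nonneg k)
    obtain ⟨p, -, σ₁, hσ₁mono, hσ₁tend⟩ :=
      tendsto_subseq_of_bounded Metric.isBounded_closedBall hbd
    have hbd2 : ∀ j : ℕ, ψ ((σ₁ j : ℝ) + s) ∈
        Metric.closedBall (0 : EuclideanSpace ℝ (Fin n)) M := by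
      intro j
      rw [Metric.mem_closedBall, dist_zero_right]
      exact hM _ (add_nonneg (Nat.cast_nonneg _) hs.le)
    obtain ⟨q, -, σ₂, hσ₂mono, hσ₂tend⟩ :=
      tendsto_subseq_of_bounded Metric.isBounded_closedBall hbd2
    set σ : ℕ → ℕ := σ₁ ∘ σ₂ with hσdef
    have hσmono : StrictMono σ := hσ₁mono.comp hσ₂mono
    have hp : Tendsto (fun j => ψ (σ j)) atTop (𝓝 p) :=
      hσ₁tend.comp hσ₂mono.tendsto_atTop
    have hq : Tendsto (fun j => ψ ((σ j : ℝ) + s)) atTop (𝓝 q) := hσ₂tend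
    have hpX : p ∈ X :=
      hXclosed.mem_of_tendsto hp (Eventually.of_forall fun j => hψX _ (Nat.cast_nonneg _))
    have hqX : q ∈ X :=
      hXclosed.mem_of_tendsto hq
        (Eventually.of_forall fun j => hψX _ (add_nonneg (Nat.cast_nonneg _) hs.le))
    have hinner_cont : Continuous fun z : EuclideanSpace ℝ (Fin n) => (inner ℝ v z : ℝ) :=
      Continuous.inner continuous_const continuous_id
    have hpv : (inner ℝ v p : ℝ) = 0 := by
      have h1 : Tendsto (fun j => (inner ℝ v (ψ (σ j)) : ℝ)) atTop (𝓝 (inner ℝ v p : ℝ)) :=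
        (hinner_cont.tendsto p).comp hp
      have h2 : (fun j => (inner ℝ v (ψ (σ j)) : ℝ)) = fun _ => (0:ℝ) :=
        funext fun j => hψv _
      rw [h2] at h1
      exact (tendsto_nhds_unique h1 tendsto_const_nhds)
    have hqv : (inner ℝ v q : ℝ) = 0 := by
      have h1 : Tendsto (fun j => (inner ℝ v (ψ ((σ j : ℝ) + s)) : ℝ)) atTop
          (𝓝 (inner ℝ v q : ℝ)) := (hinner_cont.tendsto q).comp hq
      have h2 : (fun j => (inner ℝ v (ψ ((σ j : ℝ) + s)) : ℝ)) = fun _ => (0:ℝ) :=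
        funext fun j => hψv _
      rw [h2] at h1
      exact (tendsto_nhds_unique h1 tendsto_const_nhds)
    have hgcont : Continuous fun z => gfun K v z := by
      apply (LipschitzWith.of_dist_le_mul (K := Real.toNNReal (2/ε)) ?_).continuous
      intro z w
      rw [Real.dist_eq, dist_eq_norm, Real.coe_toNNReal _ (by positivity)]
      calc |gfun K v z - gfun K v w| ≤ 2 * (‖z - w‖/ε) := hcd.gfun_lipschitz z w
      _ = 2/ε * ‖z - w‖ := by ring
    have hgL : gfun K v (p - q) = L := by
      have h1 : Tendsto (fun j => gfun K v (ψ (σ j) - ψ ((σ j : ℝ) + s))) atTop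
          (𝓝 (gfun K v (p - q))) := (hgcont.tendsto _).comp (hp.sub hq)
      have h2 : Tendsto (fun j => a (σ j)) atTop (𝓝 L) := haL.comp hσmono.tendsto_atTop
      exact tendsto_nhds_unique h1 h2
    have hpqne : ∀ c : ℝ, q ≠ p + c • v := by
      intro c hqe
      have hc0 : c = 0 := by
        have h' := hqv
        rw [hqe, inner_add_right, real_inner_smul_right,
          real_inner_self_eq_norm_mul_norm, hvnorm, hpv] at h'
        simpa using h'
      rw [hc0, zero_smul, add_zero] at hqe
      have h0 : gfun K v (p - q) = 0 := by rw [hqe, sub_self, hcd.gfun_zero]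
      rw [hgL] at h0
      linarith
    -- continuity of the time-one map along the subsequences
    have hflowtend : ∀ z ∈ X, ∀ w : ℕ → EuclideanSpace ℝ (Fin n), (∀ j, w j ∈ X) →
        Tendsto w atTop (𝓝 z) → Tendsto (fun j => φ 1 (w j)) atTop (𝓝 (φ 1 z)) := by
      intro z hz w hwX hw
      rw [Metric.tendsto_atTop]
      intro ε'' hε''
      obtain ⟨δ, hδpos, hδ⟩ := flow_cont hf hφ0 hφX hφode hz zero_le_one hε''
      obtain ⟨N, hN⟩ := Metric.tendsto_atTop.mp hw δ hδpos
      exact ⟨N, fun j hj => hδ (w j) (hwX j) (hN j hj)⟩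
    have hc1 := hflowtend p hpX (fun j => ψ (σ j))
      (fun j => hψX _ (Nat.cast_nonneg _)) hp
    have hc2 := hflowtend q hqX (fun j => ψ ((σ j : ℝ) + s))
      (fun j => hψX _ (add_nonneg (Nat.cast_nonneg _) hs.le)) hq
    -- time shift by one
    have hshift1 : ∀ T : ℝ, 0 ≤ T → ψ (T + 1) = piProj v (φ 1 (ψ T)) := by
      intro T hT
      have h1 : φ (T + 1) ξ = φ 1 (φ T ξ) := by
        rw [← hsemi ξ hξ T hT 1 zero_le_one]
        congr 1; ring
      have h2 : φ T ξ = ψ T + (inner ℝ v (φ T ξ) : ℝ) • v := eq_piProj_add v _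
      have h3 : φ 1 (φ T ξ) = φ 1 (ψ T) + (inner ℝ v (φ T ξ) : ℝ) • v := by
        conv_lhs => rw [h2]
        exact htrans _ (hψX T hT) _ 1 zero_le_one
      show piProj v (φ (T+1) ξ) = piProj v (φ 1 (ψ T))
      rw [h1, h3, piProj_add_smul hvnorm]
    have hψ1p : Tendsto (fun j => ψ ((σ j : ℝ) + 1)) atTop (𝓝 (piProj v (φ 1 p))) := by
      have h1 := ((piProj_continuous v).tendsto _).comp hc1
      exact Tendsto.congr (fun j => (hshift1 (σ j) (Nat.cast_nonneg _)).symm) h1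
    have hψ1q : Tendsto (fun j => ψ ((σ j : ℝ) + s + 1)) atTop
        (𝓝 (piProj v (φ 1 q))) := by
      have h1 := ((piProj_continuous v).tendsto _).comp hc2
      exact Tendsto.congr
        (fun j => (hshift1 ((σ j : ℝ) + s) (add_nonneg (Nat.cast_nonneg _) hs.le)).symm) h1
    have hgL1 : gfun K v (piProj v (φ 1 p) - piProj v (φ 1 q)) = L := by
      have h1 : Tendsto (fun j => gfun K v (ψ ((σ j : ℝ) + 1) - ψ ((σ j : ℝ) + s + 1)))
          atTop (𝓝 (gfun K v (piProj v (φ 1 p) - piProj v (φ 1 q)))) :=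
        (hgcont.tendsto _).comp (hψ1p.sub hψ1q)
      have hσ'mono : StrictMono (fun j => σ j + 1) := fun i j hij => by
        show σ i + 1 < σ j + 1
        exact Nat.succ_lt_succ (hσmono hij)
      have h2 : Tendsto (fun j => a (σ j + 1)) atTop (𝓝 L) :=
        haL.comp (StrictMono.tendsto_atTop hσ'mono)
      have h3 : ∀ j, a (σ j + 1) = gfun K v (ψ ((σ j : ℝ) + 1) - ψ ((σ j : ℝ) + s + 1)) := by
        intro j
        show gfun K v (ψ ((σ j + 1 : ℕ) : ℝ) - ψ (((σ j + 1 : ℕ) : ℝ) + s)) = _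
        have hcast : ((σ j + 1 : ℕ) : ℝ) = (σ j : ℝ) + 1 := by push_cast; ring
        rw [hcast]
        congr 2
        ring
      rw [funext h3] at h2
      exact tendsto_nhds_unique h1 h2
    have hgL1' : gfun K v (φ 1 p - φ 1 q) = L := by
      have hdecomp : φ 1 p - φ 1 q = (piProj v (φ 1 p) - piProj v (φ 1 q)) +
          ((inner ℝ v (φ 1 p) : ℝ) - (inner ℝ v (φ 1 q) : ℝ)) • v := by
        rw [piProj, piProj, sub_smul]
        abel
      rw [hdecomp, hcd.gfun_shift, hgL1]
    obtain ⟨-, heqcase⟩ := hstep p hpX q hqX 1 one_pos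
    obtain ⟨c, hc⟩ := heqcase (by rw [hgL, hgL1'])
    exact hpqne c hc
  constructor
  · -- convergence to an equilibrium of the projected system
    rintro ξ hξ ⟨M, hM⟩
    have hcst := hconst ξ hξ M hM
    have hψconst : ∀ t, 0 ≤ t → piProj v (φ t ξ) = piProj v ξ := by
      intro t ht
      rcases eq_or_lt_of_le ht with rfl | hlt
      · rw [hφ0 ξ hξ]
      · have h1 := hcst 0 le_rfl t hlt
        rw [zero_add] at h1
        rw [← h1, hφ0 ξ hξ]
    refine ⟨piProj v ξ, ?_, inner_piProj hvnorm ξ, ?_, ?_⟩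
    · rw [piProj_def]
      exact hXtrans ξ hξ _
    · -- equilibrium of the projected system
      set P : EuclideanSpace ℝ (Fin n) →L[ℝ] EuclideanSpace ℝ (Fin n) :=
        ContinuousLinearMap.id ℝ _ - (innerSL ℝ v).smulRight v with hP
      have hPapp : ∀ z, P z = piProj v z := by
        intro z
        rw [piProj]
        simp [hP, ContinuousLinearMap.sub_apply, ContinuousLinearMap.smulRight_apply, innerSL_apply_apply]
      have hd : HasDerivWithinAt (fun t => φ t ξ) (f ξ) (Ici 0) 0 := by
        have := hφode ξ hξ 0 le_rfl
        rwa [hφ0 ξ hξ] at this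
      have hd2 : HasDerivWithinAt (fun t => P (φ t ξ)) (P (f ξ)) (Ici 0) 0 :=
        P.hasFDerivAt.comp_hasDerivWithinAt 0 hd
      have hd3 : HasDerivWithinAt (fun t => P (φ t ξ)) 0 (Ici 0) 0 := by
        apply (hasDerivWithinAt_const (0:ℝ) (Ici (0:ℝ)) (piProj v ξ)).congr
        · intro t ht
          rw [hPapp, hψconst t ht]
        · rw [hPapp, hψconst 0 le_rfl]
      have hud : UniqueDiffWithinAt ℝ (Ici (0:ℝ)) 0 := uniqueDiffOn_Ici 0 0 self_mem_Ici
      have hP0 : P (f ξ) = 0 := by rw [← hd2.derivWithin hud, ← hd3.derivWithin hud]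
      have hfξ : f ξ = (inner ℝ v (f ξ) : ℝ) • v := by
        rw [hPapp, piProj] at hP0
        rwa [sub_eq_zero] at hP0
      refine ⟨(inner ℝ v (f ξ) : ℝ), ?_⟩
      rw [piProj_def, hfInv ξ hξ]
      exact hfξ
    · -- convergence (the projection is in fact constant)
      apply Tendsto.congr' _ (tendsto_const_nhds)
      filter_upwards [eventually_ge_atTop (0:ℝ)] with t ht
      exact (hψconst t ht).symm
  · -- uniqueness of the projected equilibrium
    intro p₁ p₂ hp₁X hp₁v hfp₁ hp₂X hp₂v hfp₂
    obtain ⟨r₁, hr₁⟩ := hfp₁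
    obtain ⟨r₂, hr₂⟩ := hfp₂
    have haux : ∀ (pa pb : EuclideanSpace ℝ (Fin n)) (ra rb : ℝ),
        pa ∈ X → (inner ℝ v pa : ℝ) = 0 → f pa = ra • v →
        pb ∈ X → (inner ℝ v pb : ℝ) = 0 → f pb = rb • v → rb ≤ ra → pa = pb := by
      intro pa pb ra rb haX hav hfa hbX hbv hfb hrle
      by_contra hne
      set l := lam K v (pa - pb) with hl
      have hwK : pa - pb + l • v ∈ K := hcd.lam_mem' _
      have hwnotint : pa - pb + l • v ∉ interior K := by
        intro hint
        obtain ⟨δ', hδ', hmem⟩ := int_sub_v hvnorm hint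
        have hmem' : pa - pb + (l - δ') • v ∈ K := by
          have he : pa - pb + (l - δ') • v = pa - pb + l • v - δ' • v := by
            rw [sub_smul]; abel
          rw [he]; exact hmem
        have hle := hcd.lam_le' hmem'
        rw [← hl] at hle
        linarith
      have hwne : pa - pb + l • v ≠ 0 := by
        intro h0
        have h1 : pa - pb = -(l • v) := eq_neg_of_add_eq_zero_left h0
        have h2 : (inner ℝ v (pa - pb) : ℝ) = 0 := by
          rw [inner_sub_right, hav, hbv]; ring
        rw [h1, inner_neg_right, real_inner_smul_right,
          real_inner_self_eq_norm_mul_norm, hvnorm] at h2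
        have hl0 : l = 0 := by simpa using h2
        apply hne
        rw [hl0, zero_smul, neg_zero] at h1
        exact sub_eq_zero.mp h1
      have hφa : φ 1 (pa + l • v) = pa + ra • v + l • v := by
        rw [htrans pa haX l 1 zero_le_one, heqline pa haX ra hfa 1 zero_le_one, one_mul]
      have hφb : φ 1 pb = pb + rb • v := by
        rw [heqline pb hbX rb hfb 1 zero_le_one, one_mul]
      have hdiffK : φ 1 (pa + l•v) - φ 1 pb ∈ K := by
        rw [hφa, hφb]
        have he : pa + ra•v + l•v - (pb + rb•v) = (pa - pb + l•v) + (ra - rb)•v := by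
          rw [sub_smul]; abel
        rw [he]
        exact hcd.add hwK (hKcone _ (by linarith) v hcd.vmem)
      have hdiffne : φ 1 (pa + l•v) ≠ φ 1 pb := by
        intro h0
        rw [hφa, hφb] at h0
        have h0' : pa + ra•v + l•v - (pb + rb•v) = 0 := sub_eq_zero.mpr h0
        have h1 : pa - pb + l • v = -(ra • v - rb • v) := by
          apply eq_neg_of_add_eq_zero_left
          calc pa - pb + l•v + (ra•v - rb•v) = pa + ra•v + l•v - (pb + rb•v) := by abel
          _ = 0 := h0'
        have h2 : -(pa - pb + l•v) ∈ K := by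
          rw [h1, neg_neg, ← sub_smul]
          exact hKcone _ (by linarith) v hcd.vmem
        exact hwne (hKpointed _ hwK h2)
      have hintm := hmono _ (hXtrans pa haX l) pb hbX 1 one_pos hdiffK hdiffne
      apply hwnotint
      have he : pa + l•v - pb = pa - pb + l•v := by abel
      rw [← he]
      exact hintm
    rcases le_total r₂ r₁ with h | h
    · exact haux p₁ p₂ r₁ r₂ hp₁X hp₁v hr₁ hp₂X hp₂v hr₂ h
    · exact (haux p₂ p₁ r₂ r₁ hp₂X hp₂v hr₂ hp₁X hp₁v hr₁ h).symm
end

section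
/- Let the strongly monotone, forward complete system ẋ = f(x) on X be translation invariant along the unit vector v ∈ interior(K), with X invariant under translations by v, and let V(x) = inf{α ∈ ℝ : x ⪯ αv}. Then for all ξ₁, ξ₂ ∈ X and all t > 0, V(φ_t(ξ₁) − φ_t(ξ₂)) ≤ V(ξ₁ − ξ₂), and the inequality is strict whenever ξ₁ − ξ₂ ∉ span{v}. -/
open Filter Topology Set

lemma coneV_aux {n : ℕ} {K : Set (EuclideanSpace ℝ (Fin n))}
    {v : EuclideanSpace ℝ (Fin n)}
    (hKcone : ∀ c : ℝ, 0 ≤ c → ∀ x ∈ K, c • x ∈ K)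
    (hKpointed : ∀ x ∈ K, -x ∈ K → x = 0)
    (hv : v ∈ interior K) (hvnorm : ‖v‖ = 1)
    (x : EuclideanSpace ℝ (Fin n)) :
    {α : ℝ | α • v - x ∈ K}.Nonempty ∧ BddBelow {α : ℝ | α • v - x ∈ K} := by
  obtain ⟨δ₀, δ₀pos, hball₀⟩ := Metric.isOpen_iff.mp isOpen_interior v hv
  set δ : ℝ := min δ₀ 1 with hδ
  have δpos : 0 < δ := lt_min δ₀pos one_pos
  have δle1 : δ ≤ 1 := min_le_right _ _
  have hball : Metric.ball v δ ⊆ K := fun y hy =>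
    interior_subset (hball₀ (Metric.ball_subset_ball (min_le_left _ _) hy))
  constructor
  · refine ⟨‖x‖ / δ + 1, ?_⟩
    set α : ℝ := ‖x‖ / δ + 1 with hα
    have hαpos : 0 < α := by positivity
    have hsmall : ‖α⁻¹ • x‖ < δ := by
      rw [norm_smul, norm_inv, Real.norm_eq_abs, abs_of_pos hαpos, inv_mul_lt_iff₀ hαpos]
      have h1 : ‖x‖ / δ < α := by simp [hα]
      calc ‖x‖ = (‖x‖ / δ) * δ := by field_simp
        _ < α * δ := by nlinarith
    have hmem : v - α⁻¹ • x ∈ Metric.ball v δ := by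
      rw [Metric.mem_ball, dist_eq_norm]
      have h2 : v - α⁻¹ • x - v = -(α⁻¹ • x) := by abel
      rw [h2, norm_neg]; exact hsmall
    have h3 := hKcone α hαpos.le _ (hball hmem)
    have heq : α • (v - α⁻¹ • x) = α • v - x := by
      rw [smul_sub, smul_smul, mul_inv_cancel₀ hαpos.ne', one_smul]
    rw [heq] at h3
    exact h3
  · refine ⟨-(‖x‖ / δ), fun α hα => ?_⟩
    by_contra hlt
    push_neg at hlt
    have hαneg : α < 0 := by
      have : 0 ≤ ‖x‖ / δ := by positivity
      linarith
    have hsmall : ‖α⁻¹ • x‖ < δ := by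
      rw [norm_smul, Real.norm_eq_abs, abs_inv, abs_of_neg hαneg,
        inv_mul_lt_iff₀ (by linarith : (0:ℝ) < -α)]
      have h1 : ‖x‖ / δ < -α := by linarith
      calc ‖x‖ = (‖x‖ / δ) * δ := by field_simp
        _ < -α * δ := by nlinarith
    have hk : -v + α⁻¹ • x ∈ K := by
      have h1 : (0:ℝ) ≤ -α⁻¹ := by
        simp only [neg_nonneg]
        exact (inv_nonpos).mpr hαneg.le
      have h2 := hKcone _ h1 _ hα
      have heq : (-α⁻¹) • (α • v - x) = -v + α⁻¹ • x := by
        rw [smul_sub, smul_smul, neg_mul, inv_mul_cancel₀ hαneg.ne]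
        module
      rwa [heq] at h2
    have hnk : -(-v + α⁻¹ • x) ∈ K := by
      apply hball
      rw [Metric.mem_ball, dist_eq_norm]
      have heq : -(-v + α⁻¹ • x) - v = -(α⁻¹ • x) := by abel
      rw [heq, norm_neg]; exact hsmall
    have h0 := hKpointed _ hk hnk
    have hveq : v = α⁻¹ • x := by linear_combination (norm := module) -h0
    have : ‖v‖ < 1 := by rw [hveq]; exact lt_of_lt_of_le hsmall δle1
    linarith [hvnorm ▸ this]

/-- `V(x) = inf {α : x ⪯ α v}` where `x ⪯ y` iff `y - x ∈ K`. -/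
noncomputable def coneV {n : ℕ} (K : Set (EuclideanSpace ℝ (Fin n)))
    (v x : EuclideanSpace ℝ (Fin n)) : ℝ :=
  sInf {α : ℝ | α • v - x ∈ K}

/-- if the strongly monotone, forward complete system `ẋ = f(x)` on `X` is
translation invariant along the unit vector `v ∈ interior K` and `X` is invariant under
translations by `v`, then `V(φ_t(ξ₁) - φ_t(ξ₂)) ≤ V(ξ₁ - ξ₂)` for all `ξ₁, ξ₂ ∈ X` and
`t > 0`, with strict inequality whenever `ξ₁ - ξ₂ ∉ span{v}`. -/
theorem stmt4 {n : ℕ} (K X : Set (EuclideanSpace ℝ (Fin n)))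
    (f : EuclideanSpace ℝ (Fin n) → EuclideanSpace ℝ (Fin n))
    (φ : ℝ → EuclideanSpace ℝ (Fin n) → EuclideanSpace ℝ (Fin n))
    (v : EuclideanSpace ℝ (Fin n))
    -- K is a closed pointed convex cone with nonempty interior
    (hKclosed : IsClosed K) (hKconv : Convex ℝ K)
    (hKcone : ∀ c : ℝ, 0 ≤ c → ∀ x ∈ K, c • x ∈ K)
    (hKpointed : ∀ x ∈ K, -x ∈ K → x = 0)
    (hv : v ∈ interior K) (hvnorm : ‖v‖ = 1)
    -- X is closed, the closure of its interior, and invariant under translations by v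
    (hXclosed : IsClosed X) (hXreg : X = closure (interior X))
    (hXtrans : ∀ x ∈ X, ∀ lam : ℝ, x + lam • v ∈ X)
    -- f is locally Lipschitz on X
    (hf : ∀ x ∈ X, ∃ L : NNReal, ∃ U ∈ nhdsWithin x X, LipschitzOnWith L f U)
    -- φ is the forward complete flow of ẋ = f(x) on X
    (hφ0 : ∀ ξ ∈ X, φ 0 ξ = ξ)
    (hφX : ∀ ξ ∈ X, ∀ t : ℝ, 0 ≤ t → φ t ξ ∈ X)
    (hφode : ∀ ξ ∈ X, ∀ t : ℝ, 0 ≤ t →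
      HasDerivWithinAt (fun s => φ s ξ) (f (φ t ξ)) (Set.Ici 0) t)
    -- strong monotonicity: ξ₁ ≻ ξ₂ ⟹ φ_t(ξ₁) ≫ φ_t(ξ₂) for t > 0
    (hmono : ∀ ξ₁ ∈ X, ∀ ξ₂ ∈ X, ∀ t : ℝ, 0 < t →
      ξ₁ - ξ₂ ∈ K → ξ₁ ≠ ξ₂ → φ t ξ₁ - φ t ξ₂ ∈ interior K)
    -- translation invariance along v
    (htrans : ∀ ξ ∈ X, ∀ lam t : ℝ, 0 ≤ t → φ t (ξ + lam • v) = φ t ξ + lam • v) :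
    ∀ ξ₁ ∈ X, ∀ ξ₂ ∈ X, ∀ t : ℝ, 0 < t →
      coneV K v (φ t ξ₁ - φ t ξ₂) ≤ coneV K v (ξ₁ - ξ₂) ∧
      (ξ₁ - ξ₂ ∉ Submodule.span ℝ {v} →
        coneV K v (φ t ξ₁ - φ t ξ₂) < coneV K v (ξ₁ - ξ₂)) := by
  intro ξ₁ h₁ ξ₂ h₂ t ht
  obtain ⟨hne, hbdd⟩ := coneV_aux hKcone hKpointed hv hvnorm (ξ₁ - ξ₂)
  have hSclosed : IsClosed {α : ℝ | α • v - (ξ₁ - ξ₂) ∈ K} := by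
    have hcont : Continuous fun α : ℝ => α • v - (ξ₁ - ξ₂) := (continuous_id.smul continuous_const).sub continuous_const
    exact hKclosed.preimage hcont
  set c : ℝ := coneV K v (ξ₁ - ξ₂) with hcdef
  have hc : c • v - (ξ₁ - ξ₂) ∈ K := hSclosed.csInf_mem hne hbdd
  by_cases hspan : ξ₁ - ξ₂ ∈ Submodule.span ℝ {v}
  · obtain ⟨lam, hlam⟩ := Submodule.mem_span_singleton.mp hspan
    have hξ : ξ₁ = ξ₂ + lam • v := by rw [hlam]; abel
    have hdiff : φ t ξ₁ - φ t ξ₂ = ξ₁ - ξ₂ := by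
      rw [hξ, htrans ξ₂ h₂ lam t ht.le]; abel
    rw [hdiff]
    exact ⟨le_refl _, fun h => absurd hspan h⟩
  · have hc_ne : ξ₂ + c • v ≠ ξ₁ := by
      intro h
      apply hspan
      have : ξ₁ - ξ₂ = c • v := by rw [← h]; abel
      rw [this]
      exact Submodule.smul_mem _ _ (Submodule.mem_span_singleton_self v)
    have hmem : (ξ₂ + c • v) - ξ₁ ∈ K := by
      have heq : (ξ₂ + c • v) - ξ₁ = c • v - (ξ₁ - ξ₂) := by abel
      rw [heq]; exact hc
    have hX' : ξ₂ + c • v ∈ X := hXtrans ξ₂ h₂ c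
    have hint := hmono (ξ₂ + c • v) hX' ξ₁ h₁ t ht hmem hc_ne
    rw [htrans ξ₂ h₂ c t ht.le] at hint
    have hw : c • v - (φ t ξ₁ - φ t ξ₂) ∈ interior K := by
      have heq : c • v - (φ t ξ₁ - φ t ξ₂) = φ t ξ₂ + c • v - φ t ξ₁ := by abel
      rw [heq]; exact hint
    obtain ⟨δ, δpos, hball⟩ := Metric.isOpen_iff.mp isOpen_interior _ hw
    have hεmem : (c - δ / 2) • v - (φ t ξ₁ - φ t ξ₂) ∈ K := by
      apply interior_subset
      apply hball
      rw [Metric.mem_ball, dist_eq_norm]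
      have heq : (c - δ / 2) • v - (φ t ξ₁ - φ t ξ₂) - (c • v - (φ t ξ₁ - φ t ξ₂))
          = -((δ / 2) • v) := by module
      rw [heq, norm_neg, norm_smul, Real.norm_eq_abs, abs_of_pos (by linarith : (0:ℝ) < δ / 2),
        hvnorm]
      linarith
    obtain ⟨-, hbdd'⟩ := coneV_aux hKcone hKpointed hv hvnorm (φ t ξ₁ - φ t ξ₂)
    have hle : coneV K v (φ t ξ₁ - φ t ξ₂) ≤ c - δ / 2 := csInf_le hbdd' hεmem
    exact ⟨by linarith, fun _ => by linarith⟩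
end

section
/- Let the forward complete system ẋ = f(x) on X be strongly monotone in reversed time (for all ξ₁, ξ₂ ∈ X and all t > 0, φ_t(ξ₁) ≻ φ_t(ξ₂) implies ξ₁ ≫ ξ₂) and translation invariant along the unit vector v ∈ interior(K), with X invariant under translations by v, and let V(x) = inf{α ∈ ℝ : x ⪯ αv}. Then for all ξ₁, ξ₂ ∈ X and all t > 0, V(φ_t(ξ₁) − φ_t(ξ₂)) ≥ V(ξ₁ − ξ₂), and the inequality is strict whenever ξ₁ − ξ₂ ∉ span{v}. -/
open Filter Topology Set

section Aux

variable {n : ℕ} {K : Set (EuclideanSpace ℝ (Fin n))} {v : EuclideanSpace ℝ (Fin n)}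

/-- A convex cone is closed under addition. -/
lemma coneK_add (hKconv : Convex ℝ K)
    (hKcone : ∀ c : ℝ, 0 ≤ c → ∀ x ∈ K, c • x ∈ K)
    {a b : EuclideanSpace ℝ (Fin n)} (ha : a ∈ K) (hb : b ∈ K) : a + b ∈ K := by
  have hmid : (1/2 : ℝ) • a + (1/2 : ℝ) • b ∈ K :=
    hKconv ha hb (by norm_num) (by norm_num) (by norm_num)
  have := hKcone 2 (by norm_num) _ hmid
  have heq : (2:ℝ) • ((1/2 : ℝ) • a + (1/2 : ℝ) • b) = a + b := by
    rw [smul_add, smul_smul, smul_smul]; norm_num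
  rwa [heq] at this

/-- A separating functional: nonnegative on `K` and positive at `v`. -/
lemma coneK_sep (hKclosed : IsClosed K) (hKconv : Convex ℝ K)
    (hKcone : ∀ c : ℝ, 0 ≤ c → ∀ x ∈ K, c • x ∈ K)
    (hKpointed : ∀ x ∈ K, -x ∈ K → x = 0)
    (hv : v ∈ interior K) (hvnorm : ‖v‖ = 1) :
    ∃ ℓ : EuclideanSpace ℝ (Fin n) →L[ℝ] ℝ, 0 < ℓ v ∧ ∀ y ∈ K, 0 ≤ ℓ y := by
  have hvK : v ∈ K := interior_subset hv
  have hvne : v ≠ 0 := by intro h; rw [h, norm_zero] at hvnorm; norm_num at hvnorm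
  have hnv : -v ∉ K := by
    intro h
    exact hvne (hKpointed v hvK h)
  obtain ⟨ℓ, u, hu1, hu2⟩ := geometric_hahn_banach_point_closed hKconv hKclosed hnv
  have h0K : (0 : EuclideanSpace ℝ (Fin n)) ∈ K := by
    have := hKcone 0 le_rfl v hvK
    rwa [zero_smul] at this
  have hu0 : u < 0 := by simpa using hu2 0 h0K
  have hK0 : ∀ y ∈ K, 0 ≤ ℓ y := by
    intro y hy
    by_contra hneg
    push_neg at hneg
    have hc : (0:ℝ) ≤ u / ℓ y := le_of_lt (div_pos_of_neg_of_neg hu0 hneg)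
    have := hu2 _ (hKcone (u / ℓ y) hc y hy)
    rw [map_smul, smul_eq_mul, div_mul_cancel₀ _ (ne_of_lt hneg)] at this
    exact lt_irrefl u this
  refine ⟨ℓ, ?_, hK0⟩
  have : ℓ (-v) < u := hu1
  rw [map_neg] at this
  linarith

lemma coneS_bddBelow (hKclosed : IsClosed K) (hKconv : Convex ℝ K)
    (hKcone : ∀ c : ℝ, 0 ≤ c → ∀ x ∈ K, c • x ∈ K)
    (hKpointed : ∀ x ∈ K, -x ∈ K → x = 0)
    (hv : v ∈ interior K) (hvnorm : ‖v‖ = 1) (x : EuclideanSpace ℝ (Fin n)) :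
    BddBelow {α : ℝ | α • v - x ∈ K} := by
  obtain ⟨ℓ, hℓv, hℓK⟩ := coneK_sep hKclosed hKconv hKcone hKpointed hv hvnorm
  refine ⟨ℓ x / ℓ v, fun α hα => ?_⟩
  have := hℓK _ hα
  rw [map_sub, map_smul, smul_eq_mul, sub_nonneg] at this
  exact (div_le_iff₀ hℓv).mpr this

lemma coneS_nonempty (hKcone : ∀ c : ℝ, 0 ≤ c → ∀ x ∈ K, c • x ∈ K)
    (hv : v ∈ interior K) (x : EuclideanSpace ℝ (Fin n)) :
    {α : ℝ | α • v - x ∈ K}.Nonempty := by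
  obtain ⟨ε, hε, hball⟩ := Metric.mem_nhds_iff.mp (mem_interior_iff_mem_nhds.mp hv)
  set α : ℝ := ‖x‖ / ε + 1 with hα
  have hαpos : 0 < α := by positivity
  have hmem : v - α⁻¹ • x ∈ Metric.ball v ε := by
    rw [Metric.mem_ball, dist_eq_norm]
    have : v - α⁻¹ • x - v = -(α⁻¹ • x) := by abel
    rw [this, norm_neg, norm_smul, norm_inv, Real.norm_eq_abs, abs_of_pos hαpos]
    rw [inv_mul_lt_iff₀ hαpos, hα]
    have : (‖x‖ / ε + 1) * ε = ‖x‖ + ε := by field_simp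
    rw [this]
    linarith
  have := hKcone α (le_of_lt hαpos) _ (hball hmem)
  refine ⟨α, ?_⟩
  have heq : α • (v - α⁻¹ • x) = α • v - x := by
    rw [smul_sub, smul_smul, mul_inv_cancel₀ (ne_of_gt hαpos), one_smul]
  rwa [heq] at this

lemma coneS_closed (hKclosed : IsClosed K) (x : EuclideanSpace ℝ (Fin n)) :
    IsClosed {α : ℝ | α • v - x ∈ K} := by
  have : {α : ℝ | α • v - x ∈ K} = (fun α : ℝ => α • v - x) ⁻¹' K := rfl
  rw [this]
  exact hKclosed.preimage ((continuous_id.smul continuous_const).sub continuous_const)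

/-- The infimum is attained: `V(x) • v - x ∈ K`. -/
lemma coneV_mem (hKclosed : IsClosed K) (hKconv : Convex ℝ K)
    (hKcone : ∀ c : ℝ, 0 ≤ c → ∀ x ∈ K, c • x ∈ K)
    (hKpointed : ∀ x ∈ K, -x ∈ K → x = 0)
    (hv : v ∈ interior K) (hvnorm : ‖v‖ = 1) (x : EuclideanSpace ℝ (Fin n)) :
    (coneV K v x) • v - x ∈ K :=
  (coneS_closed hKclosed x).csInf_mem (coneS_nonempty hKcone hv x)
    (coneS_bddBelow hKclosed hKconv hKcone hKpointed hv hvnorm x)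

/-- If `z + ε • v ∈ K` for all `ε > 0` then `z ∈ K`. -/
lemma mem_of_forall_eps (hKclosed : IsClosed K) (z : EuclideanSpace ℝ (Fin n))
    (h : ∀ ε : ℝ, 0 < ε → z + ε • v ∈ K) : z ∈ K := by
  have htend : Tendsto (fun ε : ℝ => z + ε • v) (𝓝[>] 0) (𝓝 z) := by
    have h1 : Tendsto (fun ε : ℝ => z + ε • v) (𝓝 0) (𝓝 (z + (0:ℝ) • v)) :=
      (continuous_const.add (continuous_id.smul continuous_const)).tendsto 0
    rw [zero_smul, add_zero] at h1
    exact h1.mono_left nhdsWithin_le_nhds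
  have hev : ∀ᶠ ε in 𝓝[>] (0:ℝ), z + ε • v ∈ K := by
    filter_upwards [self_mem_nhdsWithin] with ε hε
    exact h ε hε
  have := mem_closure_of_tendsto htend hev
  rwa [hKclosed.closure_eq] at this

end Aux

/-- if the forward complete system `ẋ = f(x)` on `X` is strongly monotone in reversed time and
translation invariant along the unit vector `v ∈ interior K`, with `X` invariant under
translations by `v`, then `V(φ_t(ξ₁) - φ_t(ξ₂)) ≥ V(ξ₁ - ξ₂)` for all `ξ₁, ξ₂ ∈ X` and
`t > 0`, with strict inequality whenever `ξ₁ - ξ₂ ∉ span{v}`. -/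
theorem stmt5 {n : ℕ} (K X : Set (EuclideanSpace ℝ (Fin n)))
    (f : EuclideanSpace ℝ (Fin n) → EuclideanSpace ℝ (Fin n))
    (φ : ℝ → EuclideanSpace ℝ (Fin n) → EuclideanSpace ℝ (Fin n))
    (v : EuclideanSpace ℝ (Fin n))
    -- K is a closed pointed convex cone with nonempty interior
    (hKclosed : IsClosed K) (hKconv : Convex ℝ K)
    (hKcone : ∀ c : ℝ, 0 ≤ c → ∀ x ∈ K, c • x ∈ K)
    (hKpointed : ∀ x ∈ K, -x ∈ K → x = 0)
    (hv : v ∈ interior K) (hvnorm : ‖v‖ = 1)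
    -- X is closed, the closure of its interior, and invariant under translations by v
    (hXclosed : IsClosed X) (hXreg : X = closure (interior X))
    (hXtrans : ∀ x ∈ X, ∀ lam : ℝ, x + lam • v ∈ X)
    -- f is locally Lipschitz on X
    (hf : ∀ x ∈ X, ∃ L : NNReal, ∃ U ∈ nhdsWithin x X, LipschitzOnWith L f U)
    -- φ is the forward complete flow of ẋ = f(x) on X
    (hφ0 : ∀ ξ ∈ X, φ 0 ξ = ξ)
    (hφX : ∀ ξ ∈ X, ∀ t : ℝ, 0 ≤ t → φ t ξ ∈ X)
    (hφode : ∀ ξ ∈ X, ∀ t : ℝ, 0 ≤ t →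
      HasDerivWithinAt (fun s => φ s ξ) (f (φ t ξ)) (Set.Ici 0) t)
    -- strong monotonicity in reversed time: φ_t(ξ₁) ≻ φ_t(ξ₂) for t > 0 implies ξ₁ ≫ ξ₂
    (hmono : ∀ ξ₁ ∈ X, ∀ ξ₂ ∈ X, ∀ t : ℝ, 0 < t →
      φ t ξ₁ - φ t ξ₂ ∈ K → φ t ξ₁ ≠ φ t ξ₂ → ξ₁ - ξ₂ ∈ interior K)
    -- translation invariance along v
    (htrans : ∀ ξ ∈ X, ∀ lam t : ℝ, 0 ≤ t → φ t (ξ + lam • v) = φ t ξ + lam • v) :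
    ∀ ξ₁ ∈ X, ∀ ξ₂ ∈ X, ∀ t : ℝ, 0 < t →
      coneV K v (ξ₁ - ξ₂) ≤ coneV K v (φ t ξ₁ - φ t ξ₂) ∧
      (ξ₁ - ξ₂ ∉ Submodule.span ℝ {v} →
        coneV K v (ξ₁ - ξ₂) < coneV K v (φ t ξ₁ - φ t ξ₂)) := by
  intro ξ₁ hξ₁ ξ₂ hξ₂ t ht
  have hvne : v ≠ 0 := by intro h; rw [h, norm_zero] at hvnorm; norm_num at hvnorm
  have hvK : v ∈ K := interior_subset hv
  set x := ξ₁ - ξ₂ with hxdef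
  set y := φ t ξ₁ - φ t ξ₂ with hydef
  set α := coneV K v y with hαdef
  have hbdd := fun z => coneS_bddBelow hKclosed hKconv hKcone hKpointed hv hvnorm z
  have hVle : ∀ z : EuclideanSpace ℝ (Fin n), ∀ β : ℝ, β • v - z ∈ K → coneV K v z ≤ β :=
    fun z β h => csInf_le (hbdd z) h
  have hαK : α • v - y ∈ K := coneV_mem hKclosed hKconv hKcone hKpointed hv hvnorm y
  -- the key step: for any ε > 0, (α + ε) • v - x ∈ interior K
  have hkey : ∀ ε : ℝ, 0 < ε → (α + ε) • v - x ∈ interior K := by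
    intro ε hε
    set η := ξ₂ + (α + ε) • v with hηdef
    have hηX : η ∈ X := hXtrans ξ₂ hξ₂ (α + ε)
    have hφη : φ t η = φ t ξ₂ + (α + ε) • v := htrans ξ₂ hξ₂ (α + ε) t (le_of_lt ht)
    have hdiff : φ t η - φ t ξ₁ = (α + ε) • v - y := by
      rw [hφη, hydef]; abel
    have hdK : φ t η - φ t ξ₁ ∈ K := by
      rw [hdiff]
      have : (α + ε) • v - y = (α • v - y) + ε • v := by
        rw [add_smul]; abel
      rw [this]
      exact coneK_add hKconv hKcone hαK (hKcone ε (le_of_lt hε) v hvK)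
    have hne : φ t η ≠ φ t ξ₁ := by
      intro heq
      have h0 : (α + ε) • v - y = 0 := by rw [← hdiff, heq, sub_self]
      have hneg : -(ε • v) ∈ K := by
        have : α • v - y = -(ε • v) := by
          rw [eq_comm, neg_eq_iff_add_eq_zero, ← h0, add_smul]; abel_nf
        rwa [← this]
      have := hKpointed (ε • v) (hKcone ε (le_of_lt hε) v hvK) hneg
      exact hvne (by simpa [smul_eq_zero, ne_of_gt hε] using this)
    have := hmono η hηX ξ₁ hξ₁ t ht hdK hne
    have heq : η - ξ₁ = (α + ε) • v - x := by rw [hηdef, hxdef]; abel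
    rwa [heq] at this
  constructor
  · -- V(x) ≤ α
    apply le_of_forall_pos_le_add
    intro ε hε
    exact hVle x (α + ε) (interior_subset (hkey ε hε))
  · -- strict inequality when x ∉ span {v}
    intro hxspan
    by_cases hcase : y = α • v
    · -- impossible: leads to x ∈ span {v}
      exfalso
      have hA : ∀ ε : ℝ, 0 < ε → (x - α • v) + ε • v ∈ K := by
        intro ε hε
        set η := ξ₂ + (α - ε) • v with hηdef
        have hηX : η ∈ X := hXtrans ξ₂ hξ₂ (α - ε)
        have hφη : φ t η = φ t ξ₂ + (α - ε) • v := htrans ξ₂ hξ₂ (α - ε) t (le_of_lt ht)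
        have hdiff : φ t ξ₁ - φ t η = ε • v := by
          rw [hφη]
          have : φ t ξ₁ - (φ t ξ₂ + (α - ε) • v) = y - (α - ε) • v := by
            rw [hydef]; abel
          rw [this, hcase, sub_smul]; abel
        have hdK : φ t ξ₁ - φ t η ∈ K := by
          rw [hdiff]; exact hKcone ε (le_of_lt hε) v hvK
        have hne : φ t ξ₁ ≠ φ t η := by
          intro heq
          have : ε • v = 0 := by rw [← hdiff, heq, sub_self]
          exact hvne (by simpa [smul_eq_zero, ne_of_gt hε] using this)
        have := interior_subset (hmono ξ₁ hξ₁ η hηX t ht hdK hne)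
        have heq : ξ₁ - η = (x - α • v) + ε • v := by
          rw [hηdef, hxdef, sub_smul]; abel
        rwa [heq] at this
      have hB : ∀ ε : ℝ, 0 < ε → (α • v - x) + ε • v ∈ K := by
        intro ε hε
        have := interior_subset (hkey ε hε)
        have heq : (α + ε) • v - x = (α • v - x) + ε • v := by
          rw [add_smul]; abel
        rwa [heq] at this
      have h1 : x - α • v ∈ K := mem_of_forall_eps hKclosed _ hA
      have h2 : α • v - x ∈ K := mem_of_forall_eps hKclosed _ hB
      have h3 : -(x - α • v) ∈ K := by rwa [neg_sub]
      have := hKpointed _ h1 h3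
      have hx : x = α • v := by
        have := sub_eq_zero.mp this
        exact this
      exact hxspan (Submodule.mem_span_singleton.mpr ⟨α, hx.symm⟩)
    · -- y ≠ α • v: strict monotonicity at ε = 0
      set η := ξ₂ + α • v with hηdef
      have hηX : η ∈ X := hXtrans ξ₂ hξ₂ α
      have hφη : φ t η = φ t ξ₂ + α • v := htrans ξ₂ hξ₂ α t (le_of_lt ht)
      have hdiff : φ t η - φ t ξ₁ = α • v - y := by
        rw [hφη, hydef]; abel
      have hdK : φ t η - φ t ξ₁ ∈ K := by rw [hdiff]; exact hαK
      have hne : φ t η ≠ φ t ξ₁ := by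
        intro heq
        have : α • v - y = 0 := by rw [← hdiff, heq, sub_self]
        exact hcase (by rw [eq_comm, ← sub_eq_zero]; rw [← neg_sub] at this; simpa using this)
      have hint := hmono η hηX ξ₁ hξ₁ t ht hdK hne
      have heq : η - ξ₁ = α • v - x := by rw [hηdef, hxdef]; abel
      rw [heq] at hint
      -- α • v - x ∈ interior K ⇒ ∃ δ > 0, (α - δ) • v - x ∈ K
      obtain ⟨ε, hε, hball⟩ := Metric.mem_nhds_iff.mp (mem_interior_iff_mem_nhds.mp hint)
      have hδmem : (α - ε/2) • v - x ∈ K := by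
        apply hball
        rw [Metric.mem_ball, dist_eq_norm]
        have : (α - ε/2) • v - x - (α • v - x) = -((ε/2) • v) := by
          module
        rw [this, norm_neg, norm_smul, hvnorm, Real.norm_eq_abs, abs_of_pos (by linarith)]
        linarith
      have := hVle x (α - ε/2) hδmem
      linarith
end

section
/- Let the strongly monotone, forward complete system ẋ = f(x) on X be translation invariant along the unit vector v ∈ interior(K), with X closed and invariant under translations by v. Then the projected system has at most one equilibrium: if p₁, p₂ ∈ X ∩ v^⊥ both satisfy f(p₁) ∈ span{v} and f(p₂) ∈ span{v}, then p₁ = p₂. -/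
open Filter Topology Set

lemma flow_eq {n : ℕ} {X : Set (EuclideanSpace ℝ (Fin n))}
    {f : EuclideanSpace ℝ (Fin n) → EuclideanSpace ℝ (Fin n)}
    {φ : ℝ → EuclideanSpace ℝ (Fin n) → EuclideanSpace ℝ (Fin n)}
    {v : EuclideanSpace ℝ (Fin n)}
    (hXtrans : ∀ x ∈ X, ∀ lam : ℝ, x + lam • v ∈ X)
    (hf : ∀ x ∈ X, ∃ L : NNReal, ∃ U ∈ nhdsWithin x X, LipschitzOnWith L f U)
    (hft : ∀ x ∈ X, ∀ lam : ℝ, f (x + lam • v) = f x)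
    (hφ0 : ∀ ξ ∈ X, φ 0 ξ = ξ)
    (hφX : ∀ ξ ∈ X, ∀ t : ℝ, 0 ≤ t → φ t ξ ∈ X)
    (hφode : ∀ ξ ∈ X, ∀ t : ℝ, 0 ≤ t →
      HasDerivWithinAt (fun s => φ s ξ) (f (φ t ξ)) (Set.Ici 0) t)
    (q : EuclideanSpace ℝ (Fin n)) (hq : q ∈ X) (r : ℝ) (hfq : f q = r • v) :
    ∀ t : ℝ, 0 ≤ t → φ t q = q + (t * r) • v := by
  have hfg : ∀ s : ℝ, f (q + (s * r) • v) = r • v := fun s => by rw [hft q hq, hfq]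
  have hg' : ∀ s : ℝ, HasDerivAt (fun u : ℝ => q + (u * r) • v) (r • v) s := by
    intro s
    exact ((hasDerivAt_mul_const r).smul_const v).const_add q
  have hcont : ContinuousOn (fun s => φ s q) (Ici (0:ℝ)) :=
    fun t ht => (hφode q hq t ht).continuousWithinAt
  intro b hb
  set A : Set ℝ := {t | t ∈ Icc 0 b ∧ ∀ s ∈ Icc 0 t, φ s q = q + (s * r) • v} with hA
  have h0A : (0:ℝ) ∈ A := by
    refine ⟨⟨le_rfl, hb⟩, ?_⟩
    intro s hs
    have hs0 : s = 0 := le_antisymm hs.2 hs.1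
    subst hs0
    simp [hφ0 q hq]
  have hAne : A.Nonempty := ⟨0, h0A⟩
  have hAbdd : BddAbove A := ⟨b, fun t ht => ht.1.2⟩
  set τ := sSup A with hτdef
  have hτ0 : 0 ≤ τ := le_csSup hAbdd h0A
  have hτb : τ ≤ b := csSup_le hAne fun t ht => ht.1.2
  have hlt' : ∀ u, 0 ≤ u → u < τ → φ u q = q + (u * r) • v := by
    intro u hu0 huτ
    obtain ⟨t, htA, hut⟩ := exists_lt_of_lt_csSup hAne huτ
    exact htA.2 u ⟨hu0, le_of_lt hut⟩
  have hτeq : φ τ q = q + (τ * r) • v := by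
    rcases eq_or_lt_of_le hτ0 with h0 | h0
    · rw [← h0]; simp [hφ0 q hq]
    · have hclo : τ ∈ closure (Ico (0:ℝ) τ) := by
        rw [closure_Ico h0.ne]; exact ⟨hτ0, le_rfl⟩
      haveI : (𝓝[Ico (0:ℝ) τ] τ).NeBot := mem_closure_iff_nhdsWithin_neBot.mp hclo
      have l1 : Tendsto (fun u => φ u q) (𝓝[Ico (0:ℝ) τ] τ) (𝓝 (φ τ q)) :=
        ((hφode q hq τ hτ0).continuousWithinAt).mono Ico_subset_Ici_self
      have l2 : Tendsto (fun u : ℝ => q + (u * r) • v) (𝓝[Ico (0:ℝ) τ] τ)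
          (𝓝 (q + (τ * r) • v)) := ((hg' τ).continuousAt).continuousWithinAt
      have heqv : (fun u => φ u q) =ᶠ[𝓝[Ico (0:ℝ) τ] τ] fun u : ℝ => q + (u * r) • v := by
        filter_upwards [self_mem_nhdsWithin] with u hu
        exact hlt' u hu.1 hu.2
      exact tendsto_nhds_unique (l1.congr' heqv) l2
  have hτA : τ ∈ A := by
    refine ⟨⟨hτ0, hτb⟩, ?_⟩
    intro s hs
    rcases eq_or_lt_of_le hs.2 with h | h
    · rw [h]; exact hτeq
    · exact hlt' s hs.1 h
  have hτeqb : τ = b := by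
    by_contra hne
    have hτltb : τ < b := lt_of_le_of_ne hτb hne
    have hx₀X : φ τ q ∈ X := hφX q hq τ hτ0
    obtain ⟨L, U, hU, hLip⟩ := hf _ hx₀X
    rw [mem_nhdsWithin] at hU
    obtain ⟨V, hVopen, hx₀V, hVU⟩ := hU
    have hcw : ContinuousWithinAt (fun s => φ s q) (Ici 0) τ :=
      (hφode q hq τ hτ0).continuousWithinAt
    have hpre : (fun s => φ s q) ⁻¹' V ∈ 𝓝[Ici (0:ℝ)] τ := hcw (hVopen.mem_nhds hx₀V)
    rw [mem_nhdsWithin] at hpre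
    obtain ⟨W, hWopen, hτW, hWsub⟩ := hpre
    obtain ⟨δ₁, hδ₁pos, hball₁⟩ := Metric.isOpen_iff.mp hWopen τ hτW
    have hgτV : q + (τ * r) • v ∈ V := hτeq ▸ hx₀V
    have hgc : ContinuousAt (fun u : ℝ => q + (u * r) • v) τ := (hg' τ).continuousAt
    have hpre2 : (fun u : ℝ => q + (u * r) • v) ⁻¹' V ∈ 𝓝 τ := hgc (hVopen.mem_nhds hgτV)
    obtain ⟨δ₂, hδ₂pos, hball₂⟩ := Metric.mem_nhds_iff.mp hpre2
    set δ := min δ₁ δ₂ with hδdef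
    have hδpos : 0 < δ := lt_min hδ₁pos hδ₂pos
    set b' := min b (τ + δ/2) with hb'def
    have hτb' : τ < b' := lt_min hτltb (by linarith)
    have hmem : ∀ s ∈ Icc τ b', φ s q ∈ U ∧ (q + (s * r) • v) ∈ U ∧ 0 ≤ s := by
      intro s hs
      have hs0 : (0:ℝ) ≤ s := le_trans hτ0 hs.1
      have hd : dist s τ < δ := by
        rw [Real.dist_eq, abs_of_nonneg (by linarith [hs.1] : (0:ℝ) ≤ s - τ)]
        have h2 := le_trans hs.2 (min_le_right b (τ + δ/2))
        linarith
      have hφV : φ s q ∈ V :=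
        hWsub ⟨hball₁ (Metric.mem_ball.mpr (lt_of_lt_of_le hd (min_le_left _ _))), hs0⟩
      have hgV : q + (s * r) • v ∈ V :=
        hball₂ (Metric.mem_ball.mpr (lt_of_lt_of_le hd (min_le_right _ _)))
      exact ⟨hVU ⟨hφV, hφX q hq s hs0⟩, hVU ⟨hgV, hXtrans q hq (s * r)⟩, hs0⟩
    have huniq : EqOn (fun s => φ s q) (fun u : ℝ => q + (u * r) • v) (Icc τ b') := by
      refine ODE_solution_unique_of_mem_Icc_right (v := fun _ x => f x) (s := fun _ => U)
        (fun _ _ => hLip) (hcont.mono (fun s hs => le_trans hτ0 hs.1)) ?_ ?_ ?_ ?_ ?_ hτeq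
      · intro t ht
        have ht0 : (0:ℝ) ≤ t := le_trans hτ0 ht.1
        exact (hφode q hq t ht0).mono (Ici_subset_Ici.mpr ht0)
      · intro t ht; exact (hmem t (Ico_subset_Icc_self ht)).1
      · exact (continuous_const.add ((continuous_id.mul continuous_const).smul
          continuous_const)).continuousOn
      · intro t ht
        simpa [hfg t] using (hg' t).hasDerivWithinAt
      · intro t ht; exact (hmem t (Ico_subset_Icc_self ht)).2.1
    have hb'A : b' ∈ A := by
      refine ⟨⟨le_trans hτ0 (le_of_lt hτb'), min_le_left _ _⟩, ?_⟩
      intro s hs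
      rcases le_or_gt s τ with h | h
      · exact hτA.2 s ⟨hs.1, h⟩
      · exact huniq ⟨le_of_lt h, hs.2⟩
    exact absurd (le_csSup hAbdd hb'A) (not_le.mpr hτb')
  exact hτeqb ▸ hτeq

/-- a strongly monotone, forward complete system `ẋ = f(x)` on `X`,
translation invariant along the unit vector `v ∈ interior K`, with `X` closed and
invariant under translations by `v`, has at most one projected equilibrium: if
`p₁, p₂ ∈ X ∩ v^⊥` satisfy `f(p₁) ∈ span{v}` and `f(p₂) ∈ span{v}`, then `p₁ = p₂`. -/
theorem stmt10 {n : ℕ} (K X : Set (EuclideanSpace ℝ (Fin n)))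
    (f : EuclideanSpace ℝ (Fin n) → EuclideanSpace ℝ (Fin n))
    (φ : ℝ → EuclideanSpace ℝ (Fin n) → EuclideanSpace ℝ (Fin n))
    (v : EuclideanSpace ℝ (Fin n))
    -- K is a closed pointed convex cone with nonempty interior
    (hKclosed : IsClosed K) (hKconv : Convex ℝ K)
    (hKcone : ∀ c : ℝ, 0 ≤ c → ∀ x ∈ K, c • x ∈ K)
    (hKpointed : ∀ x ∈ K, -x ∈ K → x = 0)
    (hv : v ∈ interior K) (hvnorm : ‖v‖ = 1)
    -- X is closed, the closure of its interior, and invariant under translations by v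
    (hXclosed : IsClosed X) (hXreg : X = closure (interior X))
    (hXtrans : ∀ x ∈ X, ∀ lam : ℝ, x + lam • v ∈ X)
    -- f is locally Lipschitz on X and translation invariant along v
    (hf : ∀ x ∈ X, ∃ L : NNReal, ∃ U ∈ nhdsWithin x X, LipschitzOnWith L f U)
    (hft : ∀ x ∈ X, ∀ lam : ℝ, f (x + lam • v) = f x)
    -- φ is the forward complete flow of ẋ = f(x) on X
    (hφ0 : ∀ ξ ∈ X, φ 0 ξ = ξ)
    (hφX : ∀ ξ ∈ X, ∀ t : ℝ, 0 ≤ t → φ t ξ ∈ X)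
    (hφode : ∀ ξ ∈ X, ∀ t : ℝ, 0 ≤ t →
      HasDerivWithinAt (fun s => φ s ξ) (f (φ t ξ)) (Set.Ici 0) t)
    -- strong monotonicity: ξ₁ ≻ ξ₂ ⟹ φ_t(ξ₁) ≫ φ_t(ξ₂) for t > 0
    (hmono : ∀ ξ₁ ∈ X, ∀ ξ₂ ∈ X, ∀ t : ℝ, 0 < t →
      ξ₁ - ξ₂ ∈ K → ξ₁ ≠ ξ₂ → φ t ξ₁ - φ t ξ₂ ∈ interior K)
    -- p₁ and p₂ are equilibria of the projected system in X ∩ v^⊥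
    (p₁ p₂ : EuclideanSpace ℝ (Fin n))
    (hp₁X : p₁ ∈ X) (hp₁v : (inner ℝ v p₁ : ℝ) = 0) (hp₁e : ∃ r : ℝ, f p₁ = r • v)
    (hp₂X : p₂ ∈ X) (hp₂v : (inner ℝ v p₂ : ℝ) = 0) (hp₂e : ∃ r : ℝ, f p₂ = r • v) :
    p₁ = p₂ := by
  obtain ⟨r₁, hr₁⟩ := hp₁e
  obtain ⟨r₂, hr₂⟩ := hp₂e
  obtain ⟨ρ, hρpos, hρball⟩ := Metric.isOpen_iff.mp isOpen_interior v hv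
  have hρK : Metric.ball v ρ ⊆ K := subset_trans hρball interior_subset
  have hvv : (inner ℝ v v : ℝ) = 1 := by
    rw [real_inner_self_eq_norm_mul_norm, hvnorm]; norm_num
  have key : ∀ (x y : EuclideanSpace ℝ (Fin n)) (rx ry : ℝ), x ∈ X → y ∈ X →
      (inner ℝ v x : ℝ) = 0 → (inner ℝ v y : ℝ) = 0 → f x = rx • v → f y = ry • v →
      ry ≤ rx → x = y := by
    intro x y rx ry hxX hyX hxv hyv hfx hfy hrle
    set w := y - x with hw
    have hvw : (inner ℝ v w : ℝ) = 0 := by rw [hw, inner_sub_right, hxv, hyv]; ring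
    set S : Set ℝ := {lam : ℝ | w + lam • v ∈ K} with hS
    have hSclosed : IsClosed S := by
      have : Continuous (fun lam : ℝ => w + lam • v) := continuous_const.add (continuous_id.smul continuous_const)
      exact IsClosed.preimage this hKclosed
    have hSne : S.Nonempty := by
      refine ⟨‖w‖ / ρ + 1, ?_⟩
      set lam := ‖w‖ / ρ + 1 with hlamdef
      have hlampos : 0 < lam := by positivity
      have hmemb : v + lam⁻¹ • w ∈ Metric.ball v ρ := by
        rw [Metric.mem_ball, dist_eq_norm]
        have heq : v + lam⁻¹ • w - v = lam⁻¹ • w := by abel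
        rw [heq, norm_smul, Real.norm_eq_abs, abs_of_pos (inv_pos.mpr hlampos)]
        rw [inv_mul_lt_iff₀ hlampos]
        have : lam * ρ = ‖w‖ + ρ := by
          rw [hlamdef]; field_simp
        rw [this]; linarith
      have h2 := hKcone lam (le_of_lt hlampos) _ (hρK hmemb)
      have heq2 : lam • (v + lam⁻¹ • w) = w + lam • v := by
        rw [smul_add, smul_smul, mul_inv_cancel₀ (ne_of_gt hlampos), one_smul]; abel
      rw [heq2] at h2
      exact h2
    have hSbdd : BddBelow S := by
      refine ⟨-(‖w‖ / ρ) - 1, ?_⟩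
      intro lam hlam
      by_contra hcon
      push_neg at hcon
      have hwρ : 0 ≤ ‖w‖ / ρ := div_nonneg (norm_nonneg w) (le_of_lt hρpos)
      have hμpos : 0 < -lam := by linarith
      have h1 : (-lam)⁻¹ • (w + lam • v) ∈ K :=
        hKcone _ (le_of_lt (inv_pos.mpr hμpos)) _ hlam
      have hc : (-lam)⁻¹ * lam = -1 := by rw [inv_neg, neg_mul, inv_mul_cancel₀ (by linarith : lam < 0).ne]
      have hsimp : (-lam)⁻¹ • (w + lam • v) = (-lam)⁻¹ • w - v := by
        rw [smul_add, smul_smul, hc, neg_one_smul, ← sub_eq_add_neg]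
      have h2 : v - (-lam)⁻¹ • w ∈ K := by
        apply hρK
        rw [Metric.mem_ball, dist_eq_norm]
        have heq : v - (-lam)⁻¹ • w - v = -((-lam)⁻¹ • w) := by abel
        rw [heq, norm_neg, norm_smul, Real.norm_eq_abs, abs_of_pos (inv_pos.mpr hμpos)]
        rw [inv_mul_lt_iff₀ hμpos]
        have : ‖w‖ / ρ * ρ = ‖w‖ := div_mul_cancel₀ _ (ne_of_gt hρpos)
        nlinarith [hρpos]
      have h3 : (-lam)⁻¹ • w - v = 0 := by
        apply hKpointed _ (hsimp ▸ h1)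
        rw [neg_sub]; exact h2
      have h4 : v = (-lam)⁻¹ • w := (sub_eq_zero.mp h3).symm
      have h5 : (inner ℝ v v : ℝ) = (-lam)⁻¹ * (inner ℝ v w : ℝ) := by
        nth_rewrite 2 [h4]
        rw [real_inner_smul_right]
      rw [hvv, hvw] at h5
      simp at h5
    set lam0 := sInf S with hlam0def
    have hlam0S : lam0 ∈ S := hSclosed.csInf_mem hSne hSbdd
    set qq := y + lam0 • v with hqq
    have hqqX : qq ∈ X := hXtrans y hyX lam0
    by_cases hcase : qq = x
    · have hin : (inner ℝ v qq : ℝ) = inner ℝ v x := by rw [hcase]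
      rw [hqq, inner_add_right, real_inner_smul_right, hvv, hyv, hxv] at hin
      have hl0 : lam0 = 0 := by linarith
      rw [hqq, hl0, zero_smul, add_zero] at hcase
      exact hcase.symm
    · exfalso
      have hfqq : f qq = ry • v := by rw [hqq, hft y hyX, hfy]
      have hKmem : qq - x ∈ K := by
        have h := hlam0S
        have heq : qq - x = w + lam0 • v := by rw [hqq, hw]; abel
        rw [heq]; exact h
      have hmonoD := hmono qq hqqX x hxX 1 one_pos hKmem hcase
      have hφqq := flow_eq hXtrans hf hft hφ0 hφX hφode qq hqqX ry hfqq 1 zero_le_one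
      have hφx := flow_eq hXtrans hf hft hφ0 hφX hφode x hxX rx hfx 1 zero_le_one
      rw [hφqq, hφx] at hmonoD
      have hD : (qq + (1 * ry) • v) - (x + (1 * rx) • v) = w + (lam0 + (ry - rx)) • v := by
        rw [hqq, hw]; module
      rw [hD] at hmonoD
      rcases lt_or_eq_of_le hrle with hlt | heqr
      · have hmem : lam0 + (ry - rx) ∈ S := by
          show w + (lam0 + (ry - rx)) • v ∈ K
          exact interior_subset hmonoD
        have := csInf_le hSbdd hmem
        rw [← hlam0def] at this
        linarith
      · have hε : ry - rx = 0 := by rw [heqr]; ring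
        rw [hε, add_zero] at hmonoD
        obtain ⟨ρ₂, hρ₂pos, hball₂⟩ := Metric.isOpen_iff.mp isOpen_interior _ hmonoD
        have hmem : lam0 - ρ₂ / 2 ∈ S := by
          have hin : w + (lam0 - ρ₂ / 2) • v ∈ Metric.ball (w + lam0 • v) ρ₂ := by
            rw [Metric.mem_ball, dist_eq_norm]
            have heq : w + (lam0 - ρ₂ / 2) • v - (w + lam0 • v) = (-(ρ₂ / 2)) • v := by
              module
            rw [heq, norm_smul, Real.norm_eq_abs, hvnorm, mul_one, abs_neg,
              abs_of_pos (by linarith : (0:ℝ) < ρ₂ / 2)]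
            linarith
          show w + (lam0 - ρ₂ / 2) • v ∈ K
          exact interior_subset (hball₂ hin)
        have := csInf_le hSbdd hmem
        rw [← hlam0def] at this
        linarith
  rcases le_total r₂ r₁ with h | h
  · exact key p₁ p₂ r₁ r₂ hp₁X hp₂X hp₁v hp₂v hr₁ hr₂ h
  · exact (key p₂ p₁ r₂ r₁ hp₂X hp₁X hp₂v hp₁v hr₂ hr₁ h).symm
end
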